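/- arXiv:1309.4029 — 6 statements merged into one kernel-verified Lean document; each statement's English description precedes it below -/
import Mathlib

section
/- Let X_1,...,X_n be a random sample drawn without replacement from a finite population (x_1,...,x_N) of real numbers, and Y_1,...,Y_n a random sample drawn with replacement (i.i.d. uniform) from the same population. If f: ℝ → ℝ is continuous and convex, then E[f(X_1 + ... + X_n)] ≤ E[f(Y_1 + ... + Y_n)]. -/
open MeasureTheory Finset Real
open scoped ENNReal

/-- The first `N` coordinates of the process `X` are a sample drawn without replacement
from the population `x : Fin N → ℝ`, i.e. the law of `(X 0, …, X (N-1))` is the uniform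
distribution over the orderings of the population. -/
def samplesWithoutReplacement {Ω : Type*} [MeasurableSpace Ω] (P : Measure Ω)
    (N : ℕ) (x : Fin N → ℝ) (X : ℕ → Ω → ℝ) : Prop :=
  Measure.map (fun ω (i : Fin N) => X i ω) P =
    (Nat.factorial N : ℝ≥0∞)⁻¹ • ∑ e : Equiv.Perm (Fin N), Measure.dirac (fun i => x (e i))

/-- The first `n` coordinates of `Y` are an i.i.d. uniform sample (with replacement)
from the population `x : Fin N → ℝ`. -/
def samplesWithReplacement {Ω : Type*} [MeasurableSpace Ω] (P : Measure Ω)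
    (N n : ℕ) (x : Fin N → ℝ) (Y : ℕ → Ω → ℝ) : Prop :=
  Measure.map (fun ω (i : Fin n) => Y i ω) P =
    ((N : ℝ≥0∞) ^ n)⁻¹ • ∑ g : Fin n → Fin N, Measure.dirac (fun i => x (g i))

namespace HoeffdingRed

open Equiv

variable {N n : ℕ}

/-- The collection of `n`-element subsets of `Fin N`. -/
def Un (N n : ℕ) : Finset (Finset (Fin N)) := Finset.powersetCard n Finset.univ

/-- Functions `Fin n → Fin N` whose image is contained in `u`. -/
def FG (n : ℕ) (u : Finset (Fin N)) : Finset (Fin n → Fin N) :=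
  Finset.univ.filter (fun g : Fin n → Fin N => Finset.image g Finset.univ ⊆ u)

/-- The number of `n`-subsets containing the image of `g`. -/
def D (g : Fin n → Fin N) : ℕ :=
  ((Un N n).filter (fun u => Finset.image g Finset.univ ⊆ u)).card

/-- The weight of `g`. -/
noncomputable def W (g : Fin n → Fin N) : ℝ := ((D g : ℝ))⁻¹

lemma image_card_le (g : Fin n → Fin N) : (Finset.image g Finset.univ).card ≤ n :=
  le_trans Finset.card_image_le (by simp)

lemma D_pos (hn : n ≤ N) (g : Fin n → Fin N) : 0 < D g := by
  obtain ⟨u, hsub, -, hcard⟩ := Finset.exists_subsuperset_card_eq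
    (Finset.subset_univ (Finset.image g Finset.univ)) (image_card_le g) (by simpa using hn)
  exact Finset.card_pos.2 ⟨u, Finset.mem_filter.2
    ⟨Finset.mem_powersetCard_univ.2 hcard, hsub⟩⟩

lemma W_nonneg (g : Fin n → Fin N) : 0 ≤ W g := by
  unfold W; positivity

lemma D_mul_W (hn : n ≤ N) (g : Fin n → Fin N) : (D g : ℝ) * W g = 1 := by
  unfold W
  rw [mul_inv_cancel₀]
  exact_mod_cast (D_pos hn g).ne'

section PermTransport

lemma mem_image_subset_iff {σ : Perm (Fin N)} {u v : Finset (Fin N)}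
    (hσ : ∀ a, a ∈ u ↔ σ a ∈ v) (s : Finset (Fin N)) :
    s.image σ ⊆ v ↔ s ⊆ u := by
  constructor
  · intro h a ha
    exact (hσ a).2 (h (Finset.mem_image_of_mem _ ha))
  · intro h b hb
    obtain ⟨a, ha, rfl⟩ := Finset.mem_image.1 hb
    exact (hσ a).1 (h ha)

lemma hσ_symm {σ : Perm (Fin N)} {u v : Finset (Fin N)}
    (hσ : ∀ a, a ∈ u ↔ σ a ∈ v) : ∀ a, a ∈ v ↔ σ.symm a ∈ u := by
  intro a
  have := hσ (σ.symm a)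
  simpa using this.symm

lemma exists_perm (u v : Finset (Fin N)) (h : u.card = v.card) :
    ∃ σ : Perm (Fin N), ∀ a, a ∈ u ↔ σ a ∈ v := by
  classical
  have h1 : Fintype.card {a : Fin N // a ∈ u} = Fintype.card {a : Fin N // a ∈ v} := by
    simpa [Fintype.card_coe] using h
  have h2 : Fintype.card {a : Fin N // ¬ a ∈ u} = Fintype.card {a : Fin N // ¬ a ∈ v} := by
    rw [Fintype.card_subtype_compl, Fintype.card_subtype_compl, h1]
  let e1 := Fintype.equivOfCardEq h1
  let e2 := Fintype.equivOfCardEq h2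
  refine ⟨(Equiv.sumCompl (· ∈ u)).symm.trans ((e1.sumCongr e2).trans
    (Equiv.sumCompl (· ∈ v))), fun a => ?_⟩
  by_cases ha : a ∈ u
  · simp only [Equiv.trans_apply, Equiv.sumCompl_symm_apply_of_pos ha,
      Equiv.sumCongr_apply, Sum.map_inl, Equiv.sumCompl_apply_inl]
    exact iff_of_true ha (e1 ⟨a, ha⟩).2
  · simp only [Equiv.trans_apply, Equiv.sumCompl_symm_apply_of_neg ha,
      Equiv.sumCongr_apply, Sum.map_inr, Equiv.sumCompl_apply_inr]
    exact iff_of_false ha (e2 ⟨a, ha⟩).2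

/-- Transport of sums over `FG n v` to sums over `FG n u` along a permutation matching `u` to `v`. -/
lemma sum_FG_comp (σ : Perm (Fin N)) {u v : Finset (Fin N)}
    (hσ : ∀ a, a ∈ u ↔ σ a ∈ v) (F : (Fin n → Fin N) → ℝ) :
    ∑ g ∈ FG n v, F g = ∑ g ∈ FG n u, F (σ ∘ g) := by
  refine Finset.sum_nbij' (fun g => σ.symm ∘ g) (fun g => σ ∘ g) ?_ ?_ ?_ ?_ ?_
  · intro g hg
    rw [FG, Finset.mem_filter] at hg ⊢
    refine ⟨Finset.mem_univ _, ?_⟩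
    rw [show Finset.image (σ.symm ∘ g) Finset.univ
        = (Finset.image g Finset.univ).image σ.symm from (Finset.image_image).symm]
    exact (mem_image_subset_iff (hσ_symm hσ) _).mpr hg.2
  · intro g hg
    rw [FG, Finset.mem_filter] at hg ⊢
    refine ⟨Finset.mem_univ _, ?_⟩
    rw [show Finset.image (σ ∘ g) Finset.univ
        = (Finset.image g Finset.univ).image σ from (Finset.image_image).symm]
    exact (mem_image_subset_iff hσ _).mpr hg.2
  · intro g _; funext i; simp
  · intro g _; funext i; simp
  · intro g _; congr 1; funext i; simp

end PermTransport

lemma D_comp (σ : Equiv.Perm (Fin N)) (g : Fin n → Fin N) : D (σ ∘ g) = D g := by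
  unfold D
  refine (Finset.card_nbij' (fun u => u.image σ) (fun u => u.image σ.symm) ?_ ?_ ?_ ?_).symm
  · intro u hu
    simp only [Finset.mem_coe, Finset.mem_filter, Un, Finset.mem_powersetCard_univ] at hu ⊢
    constructor
    · rw [Finset.card_image_of_injective _ σ.injective]
      exact hu.1
    · rw [show Finset.image (σ ∘ g) Finset.univ
        = (Finset.image g Finset.univ).image σ from (Finset.image_image).symm]
      exact Finset.image_subset_image hu.2
  · intro u hu
    simp only [Finset.mem_coe, Finset.mem_filter, Un, Finset.mem_powersetCard_univ] at hu ⊢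
    constructor
    · rw [Finset.card_image_of_injective _ σ.symm.injective]
      exact hu.1
    · intro a ha
      obtain ⟨i, -, rfl⟩ := Finset.mem_image.1 ha
      have : (σ ∘ g) i ∈ u := hu.2 (Finset.mem_image_of_mem _ (Finset.mem_univ i))
      simpa using Finset.mem_image_of_mem σ.symm this
  · intro u _
    simp [Finset.image_image]
  · intro u _
    simp [Finset.image_image]

lemma W_comp (σ : Equiv.Perm (Fin N)) (g : Fin n → Fin N) : W (σ ∘ g) = W g := by
  unfold W; rw [D_comp]

/-- total weight of functions with image inside `u`. -/
noncomputable def A (n : ℕ) (u : Finset (Fin N)) : ℝ := ∑ g ∈ FG n u, W g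

lemma sum_ite_D (F : (Fin n → Fin N) → ℝ) :
    ∑ u ∈ Un N n, ∑ g ∈ FG n u, F g = ∑ g : Fin n → Fin N, (D g : ℝ) * F g := by
  have h1 : ∀ u, ∑ g ∈ FG n u, F g
      = ∑ g : Fin n → Fin N, if Finset.image g Finset.univ ⊆ u then F g else 0 := by
    intro u; rw [FG, Finset.sum_filter]
  simp_rw [h1]
  rw [Finset.sum_comm]
  refine Finset.sum_congr rfl fun g _ => ?_
  rw [← Finset.sum_filter, Finset.sum_const, ← D, nsmul_eq_mul]

lemma sum_A (hn : n ≤ N) : ∑ u ∈ Un N n, A n u = (N : ℝ) ^ n := by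
  unfold A
  rw [sum_ite_D W]
  simp_rw [D_mul_W hn]
  simp [Finset.card_univ]

lemma A_invariant (u v : Finset (Fin N)) (h : u.card = v.card) : A n u = A n v := by
  obtain ⟨σ, hσ⟩ := HoeffdingRed.exists_perm u v h
  unfold A
  rw [sum_FG_comp σ hσ W]
  exact Finset.sum_congr rfl fun g _ => (W_comp σ g).symm

lemma card_Un_ne (u : Finset (Fin N)) (hu : u ∈ Un N n) : ((Un N n).card : ℝ) ≠ 0 := by
  have : (Un N n).Nonempty := ⟨u, hu⟩
  exact_mod_cast (Finset.card_pos.2 this).ne'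

lemma A_eq (hn : n ≤ N) (u : Finset (Fin N)) (hu : u ∈ Un N n) :
    A n u = (N : ℝ) ^ n / ((Un N n).card : ℝ) := by
  have hconst : ∑ v ∈ Un N n, A n v = ((Un N n).card : ℝ) * A n u := by
    rw [Finset.sum_congr rfl (fun v hv => A_invariant v u (by
      rw [Finset.mem_powersetCard_univ.1 hv, Finset.mem_powersetCard_univ.1 hu]))]
    rw [Finset.sum_const, nsmul_eq_mul]
  have := sum_A (N := N) hn
  rw [hconst] at this
  field_simp [card_Un_ne u hu]
  linarith [this]

lemma A_pos (hN : 1 ≤ N) (hn : n ≤ N) (u : Finset (Fin N)) (hu : u ∈ Un N n) : 0 < A n u := by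
  rw [A_eq hn u hu]
  apply div_pos
  · positivity
  · have : (Un N n).Nonempty := ⟨u, hu⟩
    exact_mod_cast Finset.card_pos.2 this

/-- fiber count of `g` at value `j`. -/
def cnt (g : Fin n → Fin N) (j : Fin N) : ℕ := (Finset.univ.filter (fun i => g i = j)).card

noncomputable def csum (n : ℕ) (u : Finset (Fin N)) (j : Fin N) : ℝ :=
  ∑ g ∈ FG n u, W g * (cnt g j : ℝ)

lemma swap_mem {u : Finset (Fin N)} {j j' : Fin N} (hj : j ∈ u) (hj' : j' ∈ u) :
    ∀ a, a ∈ u ↔ Equiv.swap j j' a ∈ u := by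
  intro a
  constructor
  · intro h
    rw [Equiv.swap_apply_def]
    split_ifs <;> assumption
  · intro h
    rw [Equiv.swap_apply_def] at h
    split_ifs at h with h1 h2
    · subst h1; exact hj
    · subst h2; exact hj'
    · exact h

lemma csum_const {u : Finset (Fin N)} {j j' : Fin N} (hj : j ∈ u) (hj' : j' ∈ u) :
    csum n u j' = csum n u j := by
  unfold csum
  rw [sum_FG_comp (Equiv.swap j j') (swap_mem hj hj') (fun g => W g * (cnt g j' : ℝ))]
  refine Finset.sum_congr rfl fun g _ => ?_
  rw [W_comp]
  congr 2
  unfold cnt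
  congr 1
  refine Finset.filter_congr fun i _ => ?_
  simp only [Function.comp_apply]
  constructor
  · intro h
    have := congrArg (Equiv.swap j j') h
    simpa [Equiv.swap_apply_right] using this
  · intro h
    rw [h, Equiv.swap_apply_left]

lemma sum_cnt {u : Finset (Fin N)} {g : Fin n → Fin N}
    (hg : Finset.image g Finset.univ ⊆ u) : ∑ j ∈ u, (cnt g j : ℝ) = (n : ℝ) := by
  have hmaps : ∀ i ∈ (Finset.univ : Finset (Fin n)), g i ∈ u := fun i _ =>
    hg (Finset.mem_image_of_mem _ (Finset.mem_univ i))
  have := Finset.card_eq_sum_card_fiberwise hmaps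
  have h2 : (n : ℝ) = ((Finset.univ : Finset (Fin n)).card : ℝ) := by simp
  rw [h2]
  rw [this]
  push_cast
  rfl

lemma csum_eq_A (hn : n ≤ N) {u : Finset (Fin N)} (hu : u ∈ Un N n) {j : Fin N} (hj : j ∈ u) :
    csum n u j = A n u := by
  have hcard : u.card = n := Finset.mem_powersetCard_univ.1 hu
  have hsum : ∑ j' ∈ u, csum n u j' = (n : ℝ) * A n u := by
    unfold csum A
    rw [Finset.sum_comm, Finset.mul_sum]
    refine Finset.sum_congr rfl fun g hg => ?_
    rw [← Finset.mul_sum, sum_cnt (Finset.mem_filter.1 hg).2]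
    ring
  have hconst : ∑ j' ∈ u, csum n u j' = (n : ℝ) * csum n u j := by
    rw [Finset.sum_congr rfl (fun j' hj' => csum_const hj hj')]
    rw [Finset.sum_const, nsmul_eq_mul, hcard]
  have hn0 : (n : ℝ) ≠ 0 := by
    have : u.Nonempty := ⟨j, hj⟩
    have := Finset.card_pos.2 this
    rw [hcard] at this
    exact_mod_cast this.ne'
  have := hconst.symm.trans hsum
  exact mul_left_cancel₀ hn0 this

/-- the weighted sum `S x g`. -/
def Sval (x : Fin N → ℝ) (g : Fin n → Fin N) : ℝ := ∑ i, x (g i)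

lemma Sval_expand {u : Finset (Fin N)} {g : Fin n → Fin N}
    (hg : Finset.image g Finset.univ ⊆ u) (x : Fin N → ℝ) :
    Sval x g = ∑ j ∈ u, (cnt g j : ℝ) * x j := by
  have hmaps : ∀ i ∈ (Finset.univ : Finset (Fin n)), g i ∈ u := fun i _ =>
    hg (Finset.mem_image_of_mem _ (Finset.mem_univ i))
  unfold Sval
  rw [← Finset.sum_fiberwise_of_maps_to hmaps (fun i => x (g i))]
  refine Finset.sum_congr rfl fun j _ => ?_
  rw [Finset.sum_congr rfl (fun i hi => by
    rw [(Finset.mem_filter.1 hi).2])]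
  rw [Finset.sum_const, nsmul_eq_mul]
  rfl

lemma B_eq (hn : n ≤ N) {u : Finset (Fin N)} (hu : u ∈ Un N n) (x : Fin N → ℝ) :
    ∑ g ∈ FG n u, W g * Sval x g = A n u * ∑ j ∈ u, x j := by
  calc ∑ g ∈ FG n u, W g * Sval x g
      = ∑ g ∈ FG n u, ∑ j ∈ u, W g * ((cnt g j : ℝ) * x j) := by
        refine Finset.sum_congr rfl fun g hg => ?_
        rw [Sval_expand (Finset.mem_filter.1 hg).2 x, Finset.mul_sum]
    _ = ∑ j ∈ u, (∑ g ∈ FG n u, W g * (cnt g j : ℝ)) * x j := by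
        rw [Finset.sum_comm]
        refine Finset.sum_congr rfl fun j _ => ?_
        rw [Finset.sum_mul]
        refine Finset.sum_congr rfl fun g _ => by ring
    _ = ∑ j ∈ u, A n u * x j := by
        refine Finset.sum_congr rfl fun j hj => ?_
        rw [show ∑ g ∈ FG n u, W g * (cnt g j : ℝ) = csum n u j from rfl, csum_eq_A hn hu hj]
    _ = A n u * ∑ j ∈ u, x j := by rw [Finset.mul_sum]

lemma jensen_u (hN : 1 ≤ N) (hn : n ≤ N) {u : Finset (Fin N)} (hu : u ∈ Un N n)
    (x : Fin N → ℝ) (f : ℝ → ℝ) (hconv : ConvexOn ℝ Set.univ f) :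
    A n u * f (∑ j ∈ u, x j) ≤ ∑ g ∈ FG n u, W g * f (Sval x g) := by
  have hA : 0 < A n u := A_pos hN hn u hu
  have hw : ∑ g ∈ FG n u, W g = A n u := rfl
  have h := hconv.map_centerMass_le (t := FG n u) (w := W) (p := Sval x)
    (fun g _ => W_nonneg g) (by rw [hw]; exact hA) (fun g _ => Set.mem_univ _)
  have hcm : (FG n u).centerMass W (Sval x) = ∑ j ∈ u, x j := by
    rw [Finset.centerMass, hw]
    simp_rw [smul_eq_mul]
    rw [B_eq hn hu x, ← mul_assoc, inv_mul_cancel₀ hA.ne', one_mul]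
  have hcm2 : (FG n u).centerMass W (f ∘ Sval x) = (A n u)⁻¹ * ∑ g ∈ FG n u, W g * f (Sval x g) := by
    rw [Finset.centerMass, hw]
    simp_rw [smul_eq_mul]
    rfl
  rw [hcm, hcm2] at h
  calc A n u * f (∑ j ∈ u, x j)
      ≤ A n u * ((A n u)⁻¹ * ∑ g ∈ FG n u, W g * f (Sval x g)) :=
        mul_le_mul_of_nonneg_left h hA.le
    _ = ∑ g ∈ FG n u, W g * f (Sval x g) := by
        rw [← mul_assoc, mul_inv_cancel₀ hA.ne', one_mul]

lemma rhs_group (hn : n ≤ N) (x : Fin N → ℝ) (f : ℝ → ℝ) :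
    ∑ g : Fin n → Fin N, f (Sval x g)
      = ∑ u ∈ Un N n, ∑ g ∈ FG n u, W g * f (Sval x g) := by
  rw [sum_ite_D (fun g => W g * f (Sval x g))]
  refine Finset.sum_congr rfl fun g _ => ?_
  rw [← mul_assoc, D_mul_W hn, one_mul]

/-- the set of the first `n` values of a permutation. -/
def Uof (hn : n ≤ N) (e : Equiv.Perm (Fin N)) : Finset (Fin N) :=
  Finset.image (fun i : Fin n => e (Fin.castLE hn i)) Finset.univ

lemma Uof_inj (hn : n ≤ N) (e : Equiv.Perm (Fin N)) :
    Function.Injective (fun i : Fin n => e (Fin.castLE hn i)) :=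
  e.injective.comp (Fin.castLE_injective hn)

lemma Uof_mem (hn : n ≤ N) (e : Equiv.Perm (Fin N)) : Uof hn e ∈ Un N n := by
  rw [Un, Finset.mem_powersetCard_univ, Uof,
    Finset.card_image_of_injective _ (Uof_inj hn e)]
  simp

lemma sum_Uof (hn : n ≤ N) (x : Fin N → ℝ) (e : Equiv.Perm (Fin N)) :
    ∑ i : Fin n, x (e (Fin.castLE hn i)) = ∑ j ∈ Uof hn e, x j := by
  rw [Uof, Finset.sum_image (fun a _ b _ h => Uof_inj hn e h)]

/-- permutations whose first-`n` image is `u`. -/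
def fiber (hn : n ≤ N) (u : Finset (Fin N)) : Finset (Equiv.Perm (Fin N)) :=
  Finset.univ.filter (fun e => Uof hn e = u)

lemma lhs_group (hn : n ≤ N) (x : Fin N → ℝ) (f : ℝ → ℝ) :
    ∑ e : Equiv.Perm (Fin N), f (∑ i : Fin n, x (e (Fin.castLE hn i)))
      = ∑ u ∈ Un N n, ((fiber hn u).card : ℝ) * f (∑ j ∈ u, x j) := by
  have hmaps : ∀ e ∈ (Finset.univ : Finset (Equiv.Perm (Fin N))), Uof hn e ∈ Un N n :=
    fun e _ => Uof_mem hn e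
  rw [← Finset.sum_fiberwise_of_maps_to hmaps
    (fun e => f (∑ i : Fin n, x (e (Fin.castLE hn i))))]
  refine Finset.sum_congr rfl fun u hu => ?_
  rw [show Finset.filter (fun e => Uof hn e = u) Finset.univ = fiber hn u from rfl]
  rw [Finset.sum_congr rfl (fun e he => ?_), Finset.sum_const, nsmul_eq_mul]
  rw [sum_Uof hn x e, (Finset.mem_filter.1 he).2]

lemma Uof_trans (hn : n ≤ N) (σ e : Equiv.Perm (Fin N)) :
    Uof hn (e.trans σ) = (Uof hn e).image σ := by
  rw [Uof, Uof, Finset.image_image]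
  rfl

lemma image_of_hσ {σ : Equiv.Perm (Fin N)} {u v : Finset (Fin N)}
    (hσ : ∀ a, a ∈ u ↔ σ a ∈ v) (hcard : u.card = v.card) : u.image σ = v := by
  apply Finset.eq_of_subset_of_card_le
  · intro b hb
    obtain ⟨a, ha, rfl⟩ := Finset.mem_image.1 hb
    exact (hσ a).1 ha
  · rw [Finset.card_image_of_injective _ σ.injective, hcard]

lemma fiber_const (hn : n ≤ N) {u v : Finset (Fin N)} (hu : u ∈ Un N n) (hv : v ∈ Un N n) :
    (fiber hn u).card = (fiber hn v).card := by
  obtain ⟨σ, hσ⟩ := HoeffdingRed.exists_perm u v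
    ((Finset.mem_powersetCard_univ.1 hu).trans (Finset.mem_powersetCard_univ.1 hv).symm)
  have himg : u.image σ = v := image_of_hσ hσ
    ((Finset.mem_powersetCard_univ.1 hu).trans (Finset.mem_powersetCard_univ.1 hv).symm)
  refine Finset.card_nbij' (fun e => e.trans σ) (fun e => e.trans σ.symm) ?_ ?_ ?_ ?_
  · intro e he
    rw [fiber, Finset.mem_coe, Finset.mem_filter] at he ⊢
    refine ⟨Finset.mem_univ _, ?_⟩
    rw [Uof_trans, he.2, himg]
  · intro e he
    rw [fiber, Finset.mem_coe, Finset.mem_filter] at he ⊢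
    refine ⟨Finset.mem_univ _, ?_⟩
    rw [Uof_trans, he.2, ← himg, Finset.image_image]
    simp
  · intro e _
    ext i
    simp
  · intro e _
    ext i
    simp

lemma sum_fiber (hn : n ≤ N) :
    ∑ u ∈ Un N n, (fiber hn u).card = Nat.factorial N := by
  have hmaps : ∀ e ∈ (Finset.univ : Finset (Equiv.Perm (Fin N))), Uof hn e ∈ Un N n :=
    fun e _ => Uof_mem hn e
  have := Finset.card_eq_sum_card_fiberwise hmaps
  rw [Finset.card_univ, Fintype.card_perm, Fintype.card_fin] at this
  simpa [fiber] using this.symm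

lemma fiber_eq (hn : n ≤ N) {u : Finset (Fin N)} (hu : u ∈ Un N n) :
    ((fiber hn u).card : ℝ) = (Nat.factorial N : ℝ) / ((Un N n).card : ℝ) := by
  have hconst : ∑ v ∈ Un N n, ((fiber hn v).card : ℝ)
      = ((Un N n).card : ℝ) * ((fiber hn u).card : ℝ) := by
    rw [Finset.sum_congr rfl (fun v hv => by
      rw [fiber_const hn hv hu])]
    rw [Finset.sum_const, nsmul_eq_mul]
  have h2 : ∑ v ∈ Un N n, ((fiber hn v).card : ℝ) = (Nat.factorial N : ℝ) := by
    rw [← Nat.cast_sum]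
    exact_mod_cast congrArg (fun m : ℕ => (m : ℝ)) (sum_fiber hn)
  rw [hconst] at h2
  field_simp [card_Un_ne u hu]
  linarith [h2]

/-- The key finite inequality. -/
lemma key (hN : 1 ≤ N) (hn : n ≤ N) (x : Fin N → ℝ) (f : ℝ → ℝ)
    (hconv : ConvexOn ℝ Set.univ f) :
    ((Nat.factorial N : ℝ))⁻¹ * ∑ e : Equiv.Perm (Fin N), f (∑ i : Fin n, x (e (Fin.castLE hn i)))
      ≤ ((N : ℝ) ^ n)⁻¹ * ∑ g : Fin n → Fin N, f (∑ i, x (g i)) := by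
  have hUn : ∃ u, u ∈ Un N n := by
    obtain ⟨u, -, -, hcard⟩ := Finset.exists_subsuperset_card_eq
      (Finset.empty_subset (Finset.univ : Finset (Fin N))) (by simp) (by simpa using hn)
    exact ⟨u, Finset.mem_powersetCard_univ.2 hcard⟩
  obtain ⟨u₀, hu₀⟩ := hUn
  have hC : (0 : ℝ) < ((Un N n).card : ℝ) := by
    exact_mod_cast Finset.card_pos.2 ⟨u₀, hu₀⟩
  have hfac : (0 : ℝ) < (Nat.factorial N : ℝ) := by
    exact_mod_cast Nat.factorial_pos N
  have hNn : (0 : ℝ) < (N : ℝ) ^ n := by positivity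
  set T := ∑ u ∈ Un N n, f (∑ j ∈ u, x j) with hT
  have hL : ((Nat.factorial N : ℝ))⁻¹
      * ∑ e : Equiv.Perm (Fin N), f (∑ i : Fin n, x (e (Fin.castLE hn i)))
      = T / ((Un N n).card : ℝ) := by
    rw [lhs_group hn x f, Finset.sum_congr rfl (fun u hu => by rw [fiber_eq hn hu])]
    rw [← Finset.mul_sum]
    field_simp
    exact hT.symm
  have hR : ((N : ℝ) ^ n)⁻¹ * ∑ g : Fin n → Fin N, f (∑ i, x (g i))
      ≥ T / ((Un N n).card : ℝ) := by
    have h1 : ∑ g : Fin n → Fin N, f (∑ i, x (g i))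
        ≥ ∑ u ∈ Un N n, A n u * f (∑ j ∈ u, x j) := by
      rw [show (∑ g : Fin n → Fin N, f (∑ i, x (g i)))
          = ∑ g : Fin n → Fin N, f (Sval x g) from rfl, rhs_group hn x f]
      exact Finset.sum_le_sum fun u hu => jensen_u hN hn hu x f hconv
    have h2 : ∑ u ∈ Un N n, A n u * f (∑ j ∈ u, x j)
        = ((N : ℝ) ^ n / ((Un N n).card : ℝ)) * T := by
      rw [Finset.sum_congr rfl (fun u hu => by rw [A_eq hn u hu]), hT, Finset.mul_sum]
    calc ((N : ℝ) ^ n)⁻¹ * ∑ g : Fin n → Fin N, f (∑ i, x (g i))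
        ≥ ((N : ℝ) ^ n)⁻¹ * (((N : ℝ) ^ n / ((Un N n).card : ℝ)) * T) := by
          apply mul_le_mul_of_nonneg_left _ (by positivity)
          rw [← h2]; exact h1
      _ = T / ((Un N n).card : ℝ) := by
          field_simp
  rw [hL]
  exact hR

lemma integral_eq_sum {Ω : Type*} [MeasurableSpace Ω] (P : Measure Ω) (m : ℕ)
    (Z : ℕ → Ω → ℝ) (hZ : ∀ i, Measurable (Z i)) {ι : Type*} [Fintype ι]
    (c : ℝ≥0∞) (p : ι → (Fin m → ℝ))
    (hmap : Measure.map (fun ω (i : Fin m) => Z i ω) P = c • ∑ j : ι, Measure.dirac (p j))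
    (F : (Fin m → ℝ) → ℝ) (hF : Measurable F) :
    ∫ ω, F (fun i => Z i ω) ∂P = c.toReal * ∑ j : ι, F (p j) := by
  have hφ : Measurable (fun ω (i : Fin m) => Z i ω) :=
    measurable_pi_lambda _ (fun i => hZ (i : ℕ))
  have hInt : ∀ j : ι, Integrable F (Measure.dirac (p j)) := by
    intro j
    refine (integrable_const (F (p j))).congr ?_
    rw [Filter.EventuallyEq, MeasureTheory.ae_dirac_eq]
    simp
  have h1 : ∫ ω, F (fun i => Z i ω) ∂P
      = ∫ v, F v ∂(Measure.map (fun ω (i : Fin m) => Z i ω) P) :=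
    (MeasureTheory.integral_map hφ.aemeasurable hF.aestronglyMeasurable).symm
  rw [h1, hmap, MeasureTheory.integral_smul_measure,
      MeasureTheory.integral_finset_sum_measure (fun j _ => hInt j)]
  simp only [MeasureTheory.integral_dirac' F _ hF.stronglyMeasurable, smul_eq_mul]

end HoeffdingRed

/-- Hoeffding's reduction lemma. -/
theorem hoeffding_reduction
    {Ω : Type*} [MeasurableSpace Ω] (P : Measure Ω) [IsProbabilityMeasure P]
    (N n : ℕ) (hN : 1 ≤ N) (hn : n ≤ N) (x : Fin N → ℝ)
    (X Y : ℕ → Ω → ℝ) (hXm : ∀ i, Measurable (X i)) (hYm : ∀ i, Measurable (Y i))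
    (hX : samplesWithoutReplacement P N x X)
    (hY : samplesWithReplacement P N n x Y)
    (f : ℝ → ℝ) (hf : Continuous f) (hconv : ConvexOn ℝ Set.univ f) :
    ∫ ω, f (∑ i ∈ Finset.range n, X i ω) ∂P ≤
      ∫ ω, f (∑ i ∈ Finset.range n, Y i ω) ∂P := by
  classical
  have hF1m : Measurable (fun v : Fin N → ℝ => f (∑ i : Fin n, v (Fin.castLE hn i))) :=
    hf.measurable.comp (Finset.measurable_sum _ (fun i _ => measurable_pi_apply _))
  have hF2m : Measurable (fun v : Fin n → ℝ => f (∑ i, v i)) :=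
    hf.measurable.comp (Finset.measurable_sum _ (fun i _ => measurable_pi_apply _))
  have hL := HoeffdingRed.integral_eq_sum P N X hXm
    ((Nat.factorial N : ℝ≥0∞))⁻¹ (fun (e : Equiv.Perm (Fin N)) (i : Fin N) => x (e i)) hX
    (fun v : Fin N → ℝ => f (∑ i : Fin n, v (Fin.castLE hn i))) hF1m
  have hR := HoeffdingRed.integral_eq_sum P n Y hYm
    (((N : ℝ≥0∞)) ^ n)⁻¹ (fun (g : Fin n → Fin N) (i : Fin n) => x (g i)) hY
    (fun v : Fin n → ℝ => f (∑ i, v i)) hF2m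
  have eL : ∫ ω, f (∑ i ∈ Finset.range n, X i ω) ∂P
      = ∫ ω, (fun v : Fin N → ℝ => f (∑ i : Fin n, v (Fin.castLE hn i))) (fun i => X i ω) ∂P := by
    congr 1
    funext ω
    congr 1
    rw [← Fin.sum_univ_eq_sum_range (fun k => X k ω) n]
    rfl
  have eR : ∫ ω, f (∑ i ∈ Finset.range n, Y i ω) ∂P
      = ∫ ω, (fun v : Fin n → ℝ => f (∑ i, v i)) (fun i => Y i ω) ∂P := by
    congr 1
    funext ω
    congr 1
    rw [← Fin.sum_univ_eq_sum_range (fun k => Y k ω) n]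
  rw [eL, eR, hL, hR]
  have ht1 : ((Nat.factorial N : ℝ≥0∞)⁻¹).toReal = ((Nat.factorial N : ℝ))⁻¹ := by
    simp [ENNReal.toReal_inv]
  have ht2 : (((N : ℝ≥0∞) ^ n)⁻¹).toReal = ((N : ℝ) ^ n)⁻¹ := by
    simp [ENNReal.toReal_inv]
  rw [ht1, ht2]
  simpa using HoeffdingRed.key hN hn x f hconv
end

section
/- Let X_1,...,X_n be sampled without replacement from a finite population (x_1,...,x_N) with mean μ = (1/N)∑x_i, minimum a and maximum b. Then for all ε > 0, P((1/n)∑_{i=1}^n X_i − μ ≥ ε) ≤ exp(−2nε²/(b−a)²). -/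
open MeasureTheory Finset Real
open scoped ENNReal

lemma hoeff_analytic {p h : ℝ} (hp0 : 0 ≤ p) (hp1 : p ≤ 1) (hh : 0 ≤ h) :
    (1 - p) + p * Real.exp h ≤ Real.exp (p * h + h ^ 2 / 8) := by
  set g : ℝ → ℝ := fun z => 1 - p + p * Real.exp z with hgdef
  have hgpos : ∀ z, 0 < g z := by
    intro z
    have := Real.exp_pos z
    show 0 < 1 - p + p * Real.exp z
    rcases le_total (Real.exp z) 1 with hz | hz
    · nlinarith
    · nlinarith
  have hg : ∀ z, HasDerivAt g (p * Real.exp z) z := by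
    intro z
    exact ((Real.hasDerivAt_exp z).const_mul p).const_add (1 - p)
  set f : ℝ → ℝ := fun z => Real.log (g z) with hfdef
  have hf : ∀ z, HasDerivAt f (p * Real.exp z / g z) z := fun z =>
    (hg z).log (ne_of_gt (hgpos z))
  -- ψ is the derivative of φ := fun z => p*z + z^2/8 - f z
  set ψ : ℝ → ℝ := fun z => p + z / 4 - p * Real.exp z / g z with hψdef
  have hψ : ∀ z, HasDerivAt ψ
      (1 / 4 - (p * Real.exp z * g z - p * Real.exp z * (p * Real.exp z)) / g z ^ 2) z := by
    intro z
    have h1 : HasDerivAt (fun z : ℝ => p + z / 4) (1 / 4) z := by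
      simpa using ((hasDerivAt_id z).div_const 4).const_add p
    have h2 : HasDerivAt (fun z => p * Real.exp z / g z)
        ((p * Real.exp z * g z - p * Real.exp z * (p * Real.exp z)) / g z ^ 2) z :=
      ((Real.hasDerivAt_exp z).const_mul p).div (hg z) (ne_of_gt (hgpos z))
    exact h1.sub h2
  have hψderiv_nonneg : ∀ z, 0 ≤ 1 / 4 -
      (p * Real.exp z * g z - p * Real.exp z * (p * Real.exp z)) / g z ^ 2 := by
    intro z
    rw [sub_nonneg, div_le_iff₀ (pow_pos (hgpos z) 2)]
    have hE := Real.exp_pos z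
    have hgz : g z = 1 - p + p * Real.exp z := rfl
    nlinarith [sq_nonneg (1 - p - p * Real.exp z)]
  have hψmono : Monotone ψ :=
    monotone_of_deriv_nonneg (fun z => (hψ z).differentiableAt)
      (fun z => by rw [(hψ z).deriv]; exact hψderiv_nonneg z)
  have hψ0 : ψ 0 = 0 := by
    have : g 0 = 1 := by simp [hgdef]
    simp [hψdef, this]
  have hψnonneg : ∀ z, 0 ≤ z → 0 ≤ ψ z := fun z hz => hψ0 ▸ hψmono hz
  set φ : ℝ → ℝ := fun z => p * z + z ^ 2 / 8 - f z with hφdef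
  have hφ : ∀ z, HasDerivAt φ (ψ z) z := by
    intro z
    have h1 : HasDerivAt (fun z : ℝ => p * z + z ^ 2 / 8) (p + z / 4) z := by
      have : HasDerivAt (fun z : ℝ => z ^ 2 / 8) (2 * z ^ 1 / 8) z :=
        (hasDerivAt_pow 2 z).div_const 8
      have h2 : HasDerivAt (fun z : ℝ => p * z) p z := by
        simpa using (hasDerivAt_id z).const_mul p
      exact (h2.add this).congr_deriv (by ring)
    exact h1.sub (hf z)
  have hφmono : MonotoneOn φ (Set.Ici 0) := by
    apply monotoneOn_of_deriv_nonneg (convex_Ici 0)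
      (Continuous.continuousOn (by
        have : Differentiable ℝ φ := fun z => (hφ z).differentiableAt
        exact this.continuous))
      (fun z _ => ((hφ z).differentiableAt).differentiableWithinAt)
    intro z hz
    rw [(hφ z).deriv]
    exact hψnonneg z (le_of_lt (by simpa using hz))
  have hφ0 : φ 0 = 0 := by
    have : g 0 = 1 := by simp [hgdef]
    simp [hφdef, hfdef, this]
  have hφh : 0 ≤ φ h := by
    rw [← hφ0]
    exact hφmono (by simp) (by simpa using hh) hh
  have hlog : Real.log (g h) ≤ p * h + h ^ 2 / 8 := by
    have : f h ≤ p * h + h ^ 2 / 8 := by simpa [hφdef] using hφh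
    simpa [hfdef] using this
  calc (1 - p) + p * Real.exp h = g h := rfl
    _ = Real.exp (Real.log (g h)) := (Real.exp_log (hgpos h)).symm
    _ ≤ Real.exp (p * h + h ^ 2 / 8) := Real.exp_le_exp.2 hlog

private lemma term_le {N : ℕ} (y : Fin N → ℝ) (hy : ∀ i, 0 < y i) {s' : Finset (Fin N)} {j₀ : Fin N}
    (hj₀ : j₀ ∉ s') {i j : Fin N} (hij : y i ≤ y j) (e : Equiv.Perm (Fin N)) (he : e j₀ = i) :
    y i * ∏ t ∈ s', y (e t) ≤ y j * ∏ t ∈ s', y (Equiv.swap i j (e t)) := by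
  have hne_i : ∀ t ∈ s', e t ≠ i := by
    intro t ht hti
    have htj : t = j₀ := e.injective (by rw [hti, he])
    rw [htj] at ht
    exact hj₀ ht
  by_cases hex : ∃ t₀ ∈ s', e t₀ = j
  · obtain ⟨t₀, ht₀, het₀⟩ := hex
    have h1 : ∏ t ∈ s', y (e t) = y j * ∏ t ∈ s'.erase t₀, y (e t) := by
      rw [← het₀]; exact (Finset.mul_prod_erase s' (fun t => y (e t)) ht₀).symm
    have hswap_eq : ∀ t ∈ s'.erase t₀, Equiv.swap i j (e t) = e t := by
      intro t ht
      rcases Finset.mem_erase.mp ht with ⟨htne, hts⟩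
      refine Equiv.swap_apply_of_ne_of_ne (hne_i t hts) ?_
      intro hj
      exact htne (e.injective (hj.trans het₀.symm))
    have h2 : ∏ t ∈ s', y (Equiv.swap i j (e t)) = y i * ∏ t ∈ s'.erase t₀, y (e t) := by
      rw [← Finset.mul_prod_erase s' (fun t => y (Equiv.swap i j (e t))) ht₀, het₀,
        Equiv.swap_apply_right]
      congr 1
      exact Finset.prod_congr rfl fun t ht => by rw [hswap_eq t ht]
    rw [h1, h2]
    have : y i * (y j * ∏ t ∈ s'.erase t₀, y (e t)) =
        y j * (y i * ∏ t ∈ s'.erase t₀, y (e t)) := by ring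
    exact le_of_eq this
  · push_neg at hex
    have hswap_eq : ∀ t ∈ s', Equiv.swap i j (e t) = e t := fun t ht =>
      Equiv.swap_apply_of_ne_of_ne (hne_i t ht) (hex t ht)
    rw [show ∏ t ∈ s', y (Equiv.swap i j (e t)) = ∏ t ∈ s', y (e t) from
      Finset.prod_congr rfl fun t ht => by rw [hswap_eq t ht]]
    exact mul_le_mul_of_nonneg_right hij
      (Finset.prod_nonneg fun t _ => (hy (e t)).le)

private lemma yd_mono {N : ℕ} (y : Fin N → ℝ) (hy : ∀ i, 0 < y i) {s' : Finset (Fin N)} {j₀ : Fin N}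
    (hj₀ : j₀ ∉ s') {i j : Fin N} (hij : y i ≤ y j) :
    y i * ∑ e ∈ univ.filter (fun e : Equiv.Perm (Fin N) => e j₀ = i), ∏ t ∈ s', y (e t) ≤
    y j * ∑ e ∈ univ.filter (fun e : Equiv.Perm (Fin N) => e j₀ = j), ∏ t ∈ s', y (e t) := by
  have hbij : ∑ e ∈ univ.filter (fun e : Equiv.Perm (Fin N) => e j₀ = j), ∏ t ∈ s', y (e t) =
      ∑ e ∈ univ.filter (fun e : Equiv.Perm (Fin N) => e j₀ = i),
        ∏ t ∈ s', y (Equiv.swap i j (e t)) := by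
    refine Finset.sum_nbij' (fun e => Equiv.swap i j * e) (fun e => Equiv.swap i j * e)
      ?_ ?_ ?_ ?_ ?_
    · intro e he
      simp only [Finset.mem_filter, Finset.mem_univ, true_and] at he ⊢
      rw [Equiv.Perm.mul_apply, he, Equiv.swap_apply_right]
    · intro e he
      simp only [Finset.mem_filter, Finset.mem_univ, true_and] at he ⊢
      rw [Equiv.Perm.mul_apply, he, Equiv.swap_apply_left]
    · intro e _
      show Equiv.swap i j * (Equiv.swap i j * e) = e
      rw [← mul_assoc, Equiv.swap_mul_self, one_mul]
    · intro e _
      show Equiv.swap i j * (Equiv.swap i j * e) = e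
      rw [← mul_assoc, Equiv.swap_mul_self, one_mul]
    · intro e _
      refine Finset.prod_congr rfl fun t _ => ?_
      rw [Equiv.Perm.mul_apply, Equiv.swap_apply_self]
  rw [hbij, Finset.mul_sum, Finset.mul_sum]
  refine Finset.sum_le_sum fun e he => ?_
  simp only [Finset.mem_filter, Finset.mem_univ, true_and] at he
  exact term_le y hy hj₀ hij e he

private lemma perm_sum_fiber {N : ℕ} (y : Fin N → ℝ) (s' : Finset (Fin N)) (j₀ : Fin N)
    (w : Fin N → ℝ) :
    ∑ e : Equiv.Perm (Fin N), w (e j₀) * ∏ t ∈ s', y (e t) =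
    ∑ i, w i * ∑ e ∈ univ.filter (fun e : Equiv.Perm (Fin N) => e j₀ = i),
      ∏ t ∈ s', y (e t) := by
  rw [← Finset.sum_fiberwise univ (fun e : Equiv.Perm (Fin N) => e j₀)
    (fun e => w (e j₀) * ∏ t ∈ s', y (e t))]
  refine Finset.sum_congr rfl fun i _ => ?_
  rw [Finset.mul_sum]
  refine Finset.sum_congr rfl fun e he => ?_
  simp only [Finset.mem_filter, Finset.mem_univ, true_and] at he
  rw [he]

private lemma cheb {N : ℕ} (y : Fin N → ℝ) (hy : ∀ i, 0 < y i) {s : Finset (Fin N)} {j₀ : Fin N}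
    (hj₀ : j₀ ∈ s) :
    (∑ i, y i) * (∑ e : Equiv.Perm (Fin N), ∏ t ∈ s, y (e t)) ≤
    (N : ℝ) * ∑ e : Equiv.Perm (Fin N), y (e j₀) * ∏ t ∈ s, y (e t) := by
  classical
  set s' := s.erase j₀ with hs'
  have hj₀s' : j₀ ∉ s' := Finset.notMem_erase _ _
  set d : Fin N → ℝ := fun i =>
    ∑ e ∈ univ.filter (fun e : Equiv.Perm (Fin N) => e j₀ = i), ∏ t ∈ s', y (e t) with hd
  have hprod : ∀ e : Equiv.Perm (Fin N), ∏ t ∈ s, y (e t) = y (e j₀) * ∏ t ∈ s', y (e t) :=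
    fun e => (Finset.mul_prod_erase s (fun t => y (e t)) hj₀).symm
  have hJ : ∑ e : Equiv.Perm (Fin N), ∏ t ∈ s, y (e t) = ∑ i, y i * d i := by
    simp_rw [hprod]
    exact perm_sum_fiber y s' j₀ y
  have hA : ∑ e : Equiv.Perm (Fin N), y (e j₀) * ∏ t ∈ s, y (e t) =
      ∑ i, y i * (y i * d i) := by
    simp_rw [hprod, ← mul_assoc]
    have h2 := perm_sum_fiber y s' j₀ (fun i => y i * y i)
    rw [h2]
  rw [hJ, hA]
  have hmono : Monovary y (fun i => y i * d i) := by
    intro i j hlt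
    by_contra hyij
    push_neg at hyij
    exact absurd (yd_mono y hy hj₀s' hyij.le) (not_le.mpr hlt)
  have := hmono.sum_mul_sum_le_card_mul_sum
  simpa [Fintype.card_fin] using this

private lemma step_lemma {N : ℕ} (y : Fin N → ℝ) (hy : ∀ i, 0 < y i) {s : Finset (Fin N)}
    {i₀ : Fin N} (hi₀ : i₀ ∉ s) :
    (N : ℝ) * ∑ e : Equiv.Perm (Fin N), ∏ t ∈ insert i₀ s, y (e t) ≤
    (∑ i, y i) * ∑ e : Equiv.Perm (Fin N), ∏ t ∈ s, y (e t) := by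
  classical
  set A : Fin N → ℝ := fun j => ∑ e : Equiv.Perm (Fin N), y (e j) * ∏ t ∈ s, y (e t) with hA
  set J : ℝ := ∑ e : Equiv.Perm (Fin N), ∏ t ∈ s, y (e t) with hJ
  set T : ℝ := ∑ i, y i with hT
  have hAswap_out : ∀ j ∉ s, A j = A i₀ := by
    intro j hj
    refine Fintype.sum_equiv (Equiv.mulRight (Equiv.swap j i₀)) _ _ fun e => ?_
    simp only [Equiv.coe_mulRight, Equiv.Perm.mul_apply]
    rw [Equiv.swap_apply_right]
    congr 1
    refine Finset.prod_congr rfl fun t ht => ?_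
    rw [Equiv.swap_apply_of_ne_of_ne (fun h => hj (by rwa [h] at ht))
      (fun h => hi₀ (by rwa [h] at ht))]
  have hins : ∀ j ∉ s, A j = ∑ e : Equiv.Perm (Fin N), ∏ t ∈ insert i₀ s, y (e t) := by
    intro j hj
    rw [hAswap_out j hj]
    exact Finset.sum_congr rfl fun e _ => (Finset.prod_insert (f := fun t => y (e t)) hi₀).symm
  have hTJ : T * J = ∑ j, A j := by
    rw [hJ, Finset.mul_sum]
    have h1 : ∀ e : Equiv.Perm (Fin N), T * ∏ t ∈ s, y (e t) =
        ∑ j, y (e j) * ∏ t ∈ s, y (e t) := by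
      intro e
      rw [← Finset.sum_mul, Equiv.sum_comp e y]
    simp_rw [h1]
    exact Finset.sum_comm
  have hsplit : ∑ j, A j = ∑ j ∈ s, A j + ∑ j ∈ sᶜ, A j :=
    (Finset.sum_add_sum_compl s A).symm
  set Jins : ℝ := ∑ e : Equiv.Perm (Fin N), ∏ t ∈ insert i₀ s, y (e t) with hJins
  have hcompl : ∑ j ∈ sᶜ, A j = (sᶜ.card : ℝ) * Jins := by
    rw [Finset.sum_congr rfl (fun j hj => hins j (Finset.mem_compl.mp hj)),
      Finset.sum_const, nsmul_eq_mul]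
  have hcheb : ∀ j ∈ s, T * J ≤ (N : ℝ) * A j := fun j hj => cheb y hy hj
  have hsums : (s.card : ℝ) * (T * J) ≤ (N : ℝ) * ∑ j ∈ s, A j := by
    calc (s.card : ℝ) * (T * J) = ∑ _j ∈ s, T * J := by
          rw [Finset.sum_const, nsmul_eq_mul]
      _ ≤ ∑ j ∈ s, (N : ℝ) * A j := Finset.sum_le_sum hcheb
      _ = (N : ℝ) * ∑ j ∈ s, A j := (Finset.mul_sum _ _ _).symm
  have hcard : (sᶜ.card : ℝ) = (N : ℝ) - s.card := by
    rw [Finset.card_compl]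
    rw [Nat.cast_sub (by simpa using Finset.card_le_univ s)]
    simp
  have hkN : (s.card : ℝ) < (N : ℝ) := by
    have hlt : s.card < N := by
      have h1 : s ⊂ univ := Finset.ssubset_univ_iff.mpr
        (fun h => hi₀ (by rw [h]; exact Finset.mem_univ i₀))
      have := Finset.card_lt_card h1
      simpa using this
    exact_mod_cast hlt
  -- N * (T*J) = N * ∑_s A + N * (N - k) * Jins ≥ k * (T*J) + N*(N-k)*Jins
  have hkey : (N : ℝ) * (T * J) ≥ (s.card : ℝ) * (T * J) + (N : ℝ) * ((N : ℝ) - s.card) * Jins := by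
    have := congrArg (fun z => (N : ℝ) * z) (hTJ.trans hsplit)
    rw [mul_add, hcompl, hcard] at this
    nlinarith [hsums]
  nlinarith [hkey, hkN]

private lemma J_le {N : ℕ} (y : Fin N → ℝ) (hy : ∀ i, 0 < y i) (hN : 1 ≤ N) :
    ∀ k, k ≤ N →
      ∑ e : Equiv.Perm (Fin N), ∏ t ∈ univ.filter (fun i : Fin N => (i : ℕ) < k), y (e t) ≤
      (N.factorial : ℝ) * ((∑ i, y i) / N) ^ k := by
  intro k
  induction k with
  | zero =>
    intro _
    have hempty : univ.filter (fun i : Fin N => (i : ℕ) < 0) = ∅ := by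
      ext i; simp
    simp [hempty, Finset.card_univ, Fintype.card_perm, Fintype.card_fin]
  | succ k ih =>
    intro hk1
    have hk : k ≤ N := Nat.le_of_succ_le hk1
    have hkN : k < N := hk1
    set i₀ : Fin N := ⟨k, hkN⟩ with hi₀def
    have hins : univ.filter (fun i : Fin N => (i : ℕ) < k + 1) =
        insert i₀ (univ.filter (fun i : Fin N => (i : ℕ) < k)) := by
      ext i
      simp only [Finset.mem_filter, Finset.mem_univ, true_and, Finset.mem_insert]
      constructor
      · intro h
        rcases Nat.lt_succ_iff_lt_or_eq.mp h with h' | h'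
        · exact Or.inr h'
        · exact Or.inl (Fin.ext h')
      · rintro (h | h)
        · rw [h]; exact Nat.lt_succ_self k
        · exact Nat.lt_succ_of_lt h
    have hi₀mem : i₀ ∉ univ.filter (fun i : Fin N => (i : ℕ) < k) := by
      simp [hi₀def]
    have hNpos : (0 : ℝ) < N := by exact_mod_cast Nat.lt_of_lt_of_le Nat.zero_lt_one hN
    have hTpos : (0 : ℝ) < ∑ i, y i :=
      Finset.sum_pos (fun i _ => hy i) (by
        have : Nonempty (Fin N) := Fin.pos_iff_nonempty.mp (by omega)
        exact Finset.univ_nonempty)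
    have hstep := step_lemma y hy hi₀mem
    rw [hins]
    have hJk := ih hk
    have hJins_le : ∑ e : Equiv.Perm (Fin N),
        ∏ t ∈ insert i₀ (univ.filter (fun i : Fin N => (i : ℕ) < k)), y (e t) ≤
        ((∑ i, y i) / N) * ∑ e : Equiv.Perm (Fin N),
          ∏ t ∈ univ.filter (fun i : Fin N => (i : ℕ) < k), y (e t) := by
      rw [div_mul_eq_mul_div, le_div_iff₀ hNpos]
      calc (∑ e : Equiv.Perm (Fin N),
            ∏ t ∈ insert i₀ (univ.filter (fun i : Fin N => (i : ℕ) < k)), y (e t)) * N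
          = (N : ℝ) * ∑ e : Equiv.Perm (Fin N),
            ∏ t ∈ insert i₀ (univ.filter (fun i : Fin N => (i : ℕ) < k)), y (e t) := by ring
        _ ≤ (∑ i, y i) * ∑ e : Equiv.Perm (Fin N),
            ∏ t ∈ univ.filter (fun i : Fin N => (i : ℕ) < k), y (e t) := hstep
    calc ∑ e : Equiv.Perm (Fin N),
          ∏ t ∈ insert i₀ (univ.filter (fun i : Fin N => (i : ℕ) < k)), y (e t)
        ≤ ((∑ i, y i) / N) * ∑ e : Equiv.Perm (Fin N),
          ∏ t ∈ univ.filter (fun i : Fin N => (i : ℕ) < k), y (e t) := hJins_le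
      _ ≤ ((∑ i, y i) / N) * ((N.factorial : ℝ) * ((∑ i, y i) / N) ^ k) :=
          mul_le_mul_of_nonneg_left hJk (by positivity)
      _ = (N.factorial : ℝ) * ((∑ i, y i) / N) ^ (k + 1) := by ring

private theorem card_filter_le (N n : ℕ) (hN : 1 ≤ N) (hn1 : 1 ≤ n) (hn : n ≤ N)
    (x : Fin N → ℝ) (a b : ℝ) (ha : ∀ i, a ≤ x i) (hb : ∀ i, x i ≤ b) (hab : a < b)
    (μ : ℝ) (hμ : μ = (∑ i, x i) / N) (ε : ℝ) (hε : 0 < ε) :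
    ((univ.filter (fun e : Equiv.Perm (Fin N) =>
        ε + μ ≤ (1 / (n : ℝ)) * ∑ t ∈ univ.filter (fun i : Fin N => (i : ℕ) < n), x (e t))).card
      : ℝ)
    ≤ (N.factorial : ℝ) * Real.exp (-(2 * n * ε ^ 2) / (b - a) ^ 2) := by
  classical
  have hNpos : (0 : ℝ) < N := by exact_mod_cast hN
  have hnpos : (0 : ℝ) < n := by exact_mod_cast hn1
  set D : ℝ := b - a with hD
  have hDpos : 0 < D := sub_pos.mpr hab
  set lam : ℝ := 4 * ε / D ^ 2 with hlam
  have hlampos : 0 < lam := by positivity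
  set y : Fin N → ℝ := fun i => Real.exp (lam * x i) with hy
  have hypos : ∀ i, 0 < y i := fun i => Real.exp_pos _
  set T : ℝ := ∑ i, y i with hT
  have hsumx : ∑ i, x i = N * μ := by rw [hμ]; field_simp
  -- mean bound via convexity of exp and the analytic lemma
  have hconv : ∀ i, y i ≤ (b - x i) / D * Real.exp (lam * a)
      + (x i - a) / D * Real.exp (lam * b) := by
    intro i
    have hw1 : 0 ≤ (b - x i) / D := by
      apply div_nonneg _ hDpos.le; linarith [hb i]
    have hw2 : 0 ≤ (x i - a) / D := by
      apply div_nonneg _ hDpos.le; linarith [ha i]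
    have hwsum : (b - x i) / D + (x i - a) / D = 1 := by
      field_simp
      linarith
    have := convexOn_exp.2 (Set.mem_univ (lam * a)) (Set.mem_univ (lam * b)) hw1 hw2 hwsum
    simp only [smul_eq_mul] at this
    have harg : (b - x i) / D * (lam * a) + (x i - a) / D * (lam * b) = lam * x i := by
      field_simp
      ring
    rwa [harg] at this
  have hμa : a ≤ μ := by
    rw [hμ, le_div_iff₀ hNpos]
    have hsum : ∑ _i : Fin N, a ≤ ∑ i, x i := Finset.sum_le_sum fun i _ => ha i
    rw [Finset.sum_const, Finset.card_univ, Fintype.card_fin, nsmul_eq_mul] at hsum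
    linarith
  have hμb : μ ≤ b := by
    rw [hμ, div_le_iff₀ hNpos]
    calc ∑ i, x i ≤ ∑ _i : Fin N, b := Finset.sum_le_sum fun i _ => hb i
      _ = b * N := by rw [Finset.sum_const, Finset.card_univ, Fintype.card_fin, nsmul_eq_mul]; ring
  set p : ℝ := (μ - a) / D with hp
  have hp0 : 0 ≤ p := div_nonneg (by linarith) hDpos.le
  have hp1 : p ≤ 1 := by rw [div_le_one hDpos]; linarith
  set hh : ℝ := lam * D with hhdef
  have hh0 : 0 ≤ hh := by positivity
  have hTle : T ≤ N * Real.exp (lam * μ + lam ^ 2 * D ^ 2 / 8) := by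
    have h1 : T ≤ ∑ i, ((b - x i) / D * Real.exp (lam * a)
        + (x i - a) / D * Real.exp (lam * b)) :=
      Finset.sum_le_sum fun i _ => hconv i
    have h2 : ∑ i, ((b - x i) / D * Real.exp (lam * a) + (x i - a) / D * Real.exp (lam * b))
        = N * ((b - μ) / D * Real.exp (lam * a) + (μ - a) / D * Real.exp (lam * b)) := by
      rw [Finset.sum_add_distrib, ← Finset.sum_mul, ← Finset.sum_mul]
      have e1 : ∑ i, (b - x i) / D = N * ((b - μ) / D) := by
        rw [← Finset.sum_div, Finset.sum_sub_distrib, hsumx, Finset.sum_const,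
          Finset.card_univ, Fintype.card_fin, nsmul_eq_mul]
        ring
      have e2 : ∑ i, (x i - a) / D = N * ((μ - a) / D) := by
        rw [← Finset.sum_div, Finset.sum_sub_distrib, hsumx, Finset.sum_const,
          Finset.card_univ, Fintype.card_fin, nsmul_eq_mul]
        ring
      rw [e1, e2]
      ring
    have h3 : (b - μ) / D * Real.exp (lam * a) + (μ - a) / D * Real.exp (lam * b)
        ≤ Real.exp (lam * μ + lam ^ 2 * D ^ 2 / 8) := by
      have hexpb : Real.exp (lam * b) = Real.exp (lam * a) * Real.exp hh := by
        rw [← Real.exp_add]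
        congr 1
        rw [hhdef, hD]
        ring
      have h1p : (b - μ) / D = 1 - p := by
        rw [hp, hD]
        field_simp
        rw [eq_sub_iff_add_eq, ← add_div, div_eq_one_iff_eq (sub_pos.mpr hab).ne']; ring
      rw [hexpb, h1p]
      have key := hoeff_analytic hp0 hp1 hh0
      calc (1 - p) * Real.exp (lam * a) + p * (Real.exp (lam * a) * Real.exp hh)
          = Real.exp (lam * a) * ((1 - p) + p * Real.exp hh) := by ring
        _ ≤ Real.exp (lam * a) * Real.exp (p * hh + hh ^ 2 / 8) :=
            mul_le_mul_of_nonneg_left key (Real.exp_pos _).le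
        _ = Real.exp (lam * a + (p * hh + hh ^ 2 / 8)) := (Real.exp_add _ _).symm
        _ = Real.exp (lam * μ + lam ^ 2 * D ^ 2 / 8) := by
            congr 1
            rw [hp, hhdef]
            field_simp
            ring
    calc T ≤ N * ((b - μ) / D * Real.exp (lam * a) + (μ - a) / D * Real.exp (lam * b)) :=
          h1.trans (le_of_eq h2)
      _ ≤ N * Real.exp (lam * μ + lam ^ 2 * D ^ 2 / 8) :=
          mul_le_mul_of_nonneg_left h3 hNpos.le
  have hTNle : T / N ≤ Real.exp (lam * μ + lam ^ 2 * D ^ 2 / 8) := by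
    rw [div_le_iff₀ hNpos]; linarith [hTle]
  -- Chernoff
  set sn : Finset (Fin N) := univ.filter (fun i : Fin N => (i : ℕ) < n) with hsn
  set F := univ.filter (fun e : Equiv.Perm (Fin N) =>
    ε + μ ≤ (1 / (n : ℝ)) * ∑ t ∈ sn, x (e t)) with hF
  have hcard : (F.card : ℝ) ≤ ∑ e : Equiv.Perm (Fin N),
      Real.exp (lam * (∑ t ∈ sn, x (e t) - n * (μ + ε))) := by
    calc (F.card : ℝ) = ∑ _e ∈ F, (1 : ℝ) := by rw [Finset.sum_const, nsmul_eq_mul, mul_one]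
      _ ≤ ∑ e ∈ F, Real.exp (lam * (∑ t ∈ sn, x (e t) - n * (μ + ε))) := by
          refine Finset.sum_le_sum fun e he => ?_
          rw [Finset.mem_filter] at he
          have hcond := he.2
          have hS : (n : ℝ) * (μ + ε) ≤ ∑ t ∈ sn, x (e t) := by
            have := mul_le_mul_of_nonneg_left hcond hnpos.le
            rw [← mul_assoc, mul_one_div, div_self (ne_of_gt hnpos), one_mul] at this
            linarith
          have : 0 ≤ lam * (∑ t ∈ sn, x (e t) - n * (μ + ε)) := by
            apply mul_nonneg hlampos.le
            linarith
          exact Real.one_le_exp this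
      _ ≤ ∑ e : Equiv.Perm (Fin N), Real.exp (lam * (∑ t ∈ sn, x (e t) - n * (μ + ε))) :=
          Finset.sum_le_sum_of_subset_of_nonneg (Finset.subset_univ F)
            (fun e _ _ => (Real.exp_pos _).le)
  have hsum_eq : ∑ e : Equiv.Perm (Fin N),
      Real.exp (lam * (∑ t ∈ sn, x (e t) - n * (μ + ε)))
      = Real.exp (-(lam * (n * (μ + ε)))) * ∑ e : Equiv.Perm (Fin N), ∏ t ∈ sn, y (e t) := by
    rw [Finset.mul_sum]
    refine Finset.sum_congr rfl fun e _ => ?_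
    rw [show lam * (∑ t ∈ sn, x (e t) - (n : ℝ) * (μ + ε))
        = -(lam * ((n : ℝ) * (μ + ε))) + lam * ∑ t ∈ sn, x (e t) from by ring,
      Real.exp_add]
    congr 1
    rw [Finset.mul_sum, Real.exp_sum]
  have hJ := J_le y hypos hN n hn
  have hfinal : (F.card : ℝ) ≤ (N.factorial : ℝ)
      * Real.exp (-(lam * (n * (μ + ε))) + n * (lam * μ + lam ^ 2 * D ^ 2 / 8)) := by
    have hTn : (T / N) ^ n ≤ Real.exp (lam * μ + lam ^ 2 * D ^ 2 / 8) ^ n := by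
      apply pow_le_pow_left₀ (div_nonneg (Finset.sum_nonneg fun i _ => (hypos i).le) hNpos.le) hTNle
    calc (F.card : ℝ) ≤ Real.exp (-(lam * (n * (μ + ε))))
          * ∑ e : Equiv.Perm (Fin N), ∏ t ∈ sn, y (e t) := by
          rw [← hsum_eq]; exact hcard
      _ ≤ Real.exp (-(lam * (n * (μ + ε)))) * ((N.factorial : ℝ) * (T / N) ^ n) :=
          mul_le_mul_of_nonneg_left hJ (Real.exp_pos _).le
      _ ≤ Real.exp (-(lam * (n * (μ + ε))))
          * ((N.factorial : ℝ) * Real.exp (lam * μ + lam ^ 2 * D ^ 2 / 8) ^ n) := by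
          apply mul_le_mul_of_nonneg_left _ (Real.exp_pos _).le
          exact mul_le_mul_of_nonneg_left hTn (by positivity)
      _ = (N.factorial : ℝ)
          * Real.exp (-(lam * (n * (μ + ε))) + n * (lam * μ + lam ^ 2 * D ^ 2 / 8)) := by
          rw [← Real.exp_nat_mul, Real.exp_add]
          ring
  have hexp_eq : -(lam * (n * (μ + ε))) + n * (lam * μ + lam ^ 2 * D ^ 2 / 8)
      = -(2 * n * ε ^ 2) / D ^ 2 := by
    rw [hlam]
    field_simp
    ring
  rw [← hexp_eq]
  exact hfinal

/-- Hoeffding's inequality for sampling without replacement. -/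
theorem hoeffding_without_replacement
    {Ω : Type*} [MeasurableSpace Ω] (P : Measure Ω) [IsProbabilityMeasure P]
    (N n : ℕ) (hN : 1 ≤ N) (hn1 : 1 ≤ n) (hn : n ≤ N) (x : Fin N → ℝ)
    (X : ℕ → Ω → ℝ) (hXm : ∀ i, Measurable (X i))
    (hX : samplesWithoutReplacement P N x X)
    (a b : ℝ) (ha : IsLeast (Set.range x) a) (hb : IsGreatest (Set.range x) b)
    (μ : ℝ) (hμ : μ = (∑ i, x i) / N)
    (ε : ℝ) (hε : 0 < ε) :
    P {ω | (1 / n) * ∑ t ∈ Finset.range n, X t ω - μ ≥ ε} ≤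
      ENNReal.ofReal (Real.exp (-(2 * n * ε ^ 2) / (b - a) ^ 2)) := by
  classical
  have hxa : ∀ i, a ≤ x i := fun i => ha.2 ⟨i, rfl⟩
  have hxb : ∀ i, x i ≤ b := fun i => hb.2 ⟨i, rfl⟩
  have hab_le : a ≤ b := by
    obtain ⟨i, hi⟩ := ha.1
    calc a ≤ x i := hxa i
      _ ≤ b := hxb i
  rcases eq_or_lt_of_le hab_le with hab | hab
  · -- degenerate case a = b : the RHS is 1
    have : (b - a) ^ 2 = 0 := by rw [← hab]; ring
    rw [this, div_zero, Real.exp_zero, ENNReal.ofReal_one]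
    exact prob_le_one
  · -- main case
    have hnpos : (0 : ℝ) < n := by exact_mod_cast hn1
    set A : Set (Fin N → ℝ) := {v | ε + μ ≤ (1 / (n : ℝ)) *
      ∑ t ∈ univ.filter (fun i : Fin N => (i : ℕ) < n), v t} with hAdef
    have hA : MeasurableSet A := by
      apply measurableSet_le measurable_const
      exact Measurable.const_mul
        (Finset.measurable_sum _ (fun t _ => measurable_pi_apply t)) _
    have hmap : Measurable (fun ω (i : Fin N) => X i ω) :=
      measurable_pi_lambda _ fun i => hXm i
    have hsum_eq : ∀ ω, ∑ t ∈ univ.filter (fun i : Fin N => (i : ℕ) < n), X (t : ℕ) ω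
        = ∑ t ∈ Finset.range n, X t ω := by
      intro ω
      refine Finset.sum_bij (fun t _ => (t : ℕ)) ?_ ?_ ?_ ?_
      · intro t ht
        rw [Finset.mem_filter] at ht
        exact Finset.mem_range.mpr ht.2
      · intro t₁ h₁ t₂ h₂ h
        exact Fin.ext h
      · intro r hr
        refine ⟨⟨r, lt_of_lt_of_le (Finset.mem_range.mp hr) hn⟩, ?_, rfl⟩
        simp [Finset.mem_range.mp hr]
      · intro t _
        rfl
    have hset : {ω | (1 / (n : ℝ)) * ∑ t ∈ Finset.range n, X t ω - μ ≥ ε}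
        = (fun ω (i : Fin N) => X i ω) ⁻¹' A := by
      ext ω
      simp only [Set.mem_setOf_eq, Set.mem_preimage, hAdef, ge_iff_le]
      rw [hsum_eq ω]
      constructor <;> intro h <;> linarith
    rw [hset, ← Measure.map_apply hmap hA, hX, Measure.smul_apply,
      MeasureTheory.Measure.finset_sum_apply, smul_eq_mul]
    have hdirac : ∀ e : Equiv.Perm (Fin N),
        Measure.dirac (fun i => x (e i)) A =
          if ε + μ ≤ (1 / (n : ℝ)) * ∑ t ∈ univ.filter (fun i : Fin N => (i : ℕ) < n), x (e t)
          then (1 : ℝ≥0∞) else 0 := by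
      intro e
      rw [Measure.dirac_apply' _ hA, Set.indicator_apply]
      simp only [hAdef, Set.mem_setOf_eq, Pi.one_apply]
    simp_rw [hdirac]
    rw [Finset.sum_boole]
    set F := univ.filter (fun e : Equiv.Perm (Fin N) =>
      ε + μ ≤ (1 / (n : ℝ)) * ∑ t ∈ univ.filter (fun i : Fin N => (i : ℕ) < n), x (e t)) with hF
    have hreal := card_filter_le N n hN hn1 hn x a b hxa hxb hab μ hμ ε hε
    have henn : (F.card : ℝ≥0∞) ≤ (N.factorial : ℝ≥0∞) *
        ENNReal.ofReal (Real.exp (-(2 * n * ε ^ 2) / (b - a) ^ 2)) := by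
      have h1 := ENNReal.ofReal_le_ofReal hreal
      rw [ENNReal.ofReal_natCast] at h1
      rwa [ENNReal.ofReal_mul (by positivity), ENNReal.ofReal_natCast] at h1
    calc (↑N.factorial : ℝ≥0∞)⁻¹ * (F.card : ℝ≥0∞)
        ≤ (↑N.factorial : ℝ≥0∞)⁻¹ * ((N.factorial : ℝ≥0∞) *
          ENNReal.ofReal (Real.exp (-(2 * n * ε ^ 2) / (b - a) ^ 2))) :=
          mul_le_mul_right henn _
      _ = ENNReal.ofReal (Real.exp (-(2 * n * ε ^ 2) / (b - a) ^ 2)) := by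
          rw [← mul_assoc, ENNReal.inv_mul_cancel
            (by exact_mod_cast Nat.factorial_ne_zero N) (ENNReal.natCast_ne_top _), one_mul]
end

section
/- Let X_1,...,X_N be a uniformly random permutation of a finite population (x_1,...,x_N) with mean μ. Define Z_k* = (1/(N−k))∑_{t=1}^k (X_t − μ) for 1 ≤ k ≤ N−1. Then (Z_k*)_{k=1}^{N−1} is a martingale with respect to its natural filtration: E[Z_k* | Z_1*,...,Z_{k−1}*] = Z_{k−1}*. -/
open MeasureTheory Finset Real
open scoped ENNReal


lemma my_integrable_dirac {α : Type*} [MeasurableSpace α] {f : α → ℝ} (hf : Measurable f)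
    (a : α) : Integrable f (Measure.dirac a) := by
  refine ⟨hf.aestronglyMeasurable, ?_⟩
  rw [HasFiniteIntegral, lintegral_dirac' _ hf.enorm]
  exact ENNReal.coe_lt_top

lemma my_integrable_unif {N : ℕ} (x : Fin N → ℝ) (h : (Fin N → ℝ) → ℝ) (hh : Measurable h) :
    Integrable h ((Nat.factorial N : ℝ≥0∞)⁻¹ •
      ∑ e : Equiv.Perm (Fin N), Measure.dirac (fun i => x (e i))) :=
  (integrable_finset_sum_measure.mpr
    (fun e _ => my_integrable_dirac hh _)).smul_measure (by simp [Nat.factorial_ne_zero])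

lemma my_integral_unif {N : ℕ} (x : Fin N → ℝ) (h : (Fin N → ℝ) → ℝ) (hh : Measurable h) :
    ∫ v, h v ∂((Nat.factorial N : ℝ≥0∞)⁻¹ •
      ∑ e : Equiv.Perm (Fin N), Measure.dirac (fun i => x (e i)))
    = (Nat.factorial N : ℝ)⁻¹ * ∑ e : Equiv.Perm (Fin N), h (fun i => x (e i)) := by
  rw [integral_smul_measure, integral_finset_sum_measure (fun e _ => my_integrable_dirac hh _)]
  simp only [integral_dirac' _ _ hh.stronglyMeasurable]
  rw [ENNReal.toReal_inv, smul_eq_mul]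
  norm_num

lemma my_sum_trunc {N n : ℕ} (hn : n ≤ N) (f : ℕ → ℝ) :
    (∑ i : Fin N, if (i : ℕ) < n then f i else 0) = ∑ t ∈ Finset.range n, f t := by
  rw [Fin.sum_univ_eq_sum_range (fun i => if i < n then f i else 0) N, ← Finset.sum_filter]
  congr 1
  ext t
  simp only [Finset.mem_filter, Finset.mem_range]
  omega

lemma my_key_comb (N k : ℕ) (hN : 2 ≤ N) (hk1 : 2 ≤ k) (hk : k ≤ N - 1) (x : Fin N → ℝ) (μ : ℝ)
    (hμ : μ = (∑ i, x i) / N)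
    (g : ℕ → (Fin N → ℝ) → ℝ)
    (hgdef : g = fun n v => (∑ i : Fin N, if (i : ℕ) < n then v i - μ else 0) / ((N : ℝ) - n))
    (W : (Fin N → ℝ) → (Fin (k - 1) → ℝ))
    (hWdef : W = fun v (j : Fin (k - 1)) => g ((j : ℕ) + 1) v)
    (B : Set (Fin (k - 1) → ℝ)) :
    ∑ e : Equiv.Perm (Fin N), Set.indicator (W ⁻¹' B) (g k) (fun i => x (e i))
    = ∑ e : Equiv.Perm (Fin N), Set.indicator (W ⁻¹' B) (g (k - 1)) (fun i => x (e i)) := by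
  classical
  have hkN : k < N := by omega
  have hk1N : k - 1 < N := by omega
  set i0 : Fin N := ⟨k - 1, hk1N⟩ with hi0
  set M : Finset (Fin N) := Finset.univ.filter (fun m => k - 1 ≤ (m : ℕ)) with hM
  have hMcard : M.card = N - (k - 1) := by
    rw [hM, Finset.card_filter,
      Fin.sum_univ_eq_sum_range (fun t => if k - 1 ≤ t then 1 else 0) N,
      ← Finset.sum_filter]
    have : (Finset.range N).filter (fun t => k - 1 ≤ t) = Finset.Ico (k - 1) N := by
      ext t
      simp only [Finset.mem_filter, Finset.mem_range, Finset.mem_Ico]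
      omega
    rw [this]
    simp [Nat.card_Ico]
  set a : Equiv.Perm (Fin N) → ℝ :=
    fun e => ∑ i : Fin N, if (i : ℕ) < k - 1 then x (e i) - μ else 0 with ha
  have swap_fix : ∀ m ∈ M, ∀ i : Fin N, (i : ℕ) < k - 1 → Equiv.swap i0 m i = i := by
    intro m hm i hi
    have hm' : k - 1 ≤ (m : ℕ) := by simpa [hM] using hm
    refine Equiv.swap_apply_of_ne_of_ne ?_ ?_
    · intro hEq; rw [hEq] at hi; simp [hi0] at hi
    · intro hEq; rw [hEq] at hi; omega
  have a_inv : ∀ m ∈ M, ∀ e : Equiv.Perm (Fin N), a (e * Equiv.swap i0 m) = a e := by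
    intro m hm e
    refine Finset.sum_congr rfl (fun i _ => ?_)
    by_cases hi : (i : ℕ) < k - 1
    · simp only [hi, if_true, Equiv.Perm.mul_apply, swap_fix m hm i hi]
    · simp [hi]
  have W_inv : ∀ m ∈ M, ∀ e : Equiv.Perm (Fin N),
      W (fun i => x ((e * Equiv.swap i0 m) i)) = W (fun i => x (e i)) := by
    intro m hm e
    funext j
    simp only [hWdef, hgdef]
    congr 1
    refine Finset.sum_congr rfl (fun i _ => ?_)
    by_cases hi : (i : ℕ) < (j : ℕ) + 1
    · have hi' : (i : ℕ) < k - 1 := by have := j.2; omega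
      simp only [hi, if_true, Equiv.Perm.mul_apply, swap_fix m hm i hi']
    · simp [hi]
  have hgk1 : ∀ e : Equiv.Perm (Fin N),
      g (k - 1) (fun i => x (e i)) = a e / ((N : ℝ) - (k - 1 : ℕ)) := by
    intro e; simp only [hgdef, ha]
  have hsplitf : ∀ f : Fin N → ℝ,
      (∑ i : Fin N, if (i : ℕ) < k then f i else 0)
      = (∑ i : Fin N, if (i : ℕ) < k - 1 then f i else 0) + f i0 := by
    intro f
    have h1 : ∀ i : Fin N, (if (i : ℕ) < k then f i else 0)
        = (if (i : ℕ) < k - 1 then f i else 0) + (if i = i0 then f i else 0) := by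
      intro i
      by_cases h2 : i = i0
      · subst h2
        have hv : (i0 : ℕ) = k - 1 := rfl
        have c1 : (i0 : ℕ) < k := by omega
        have c2 : ¬ (i0 : ℕ) < k - 1 := by omega
        rw [if_pos c1, if_neg c2]
        simp
      · have h3 : (i : ℕ) ≠ k - 1 := fun hc => h2 (Fin.ext hc)
        rw [if_neg h2]
        by_cases h4 : (i : ℕ) < k - 1
        · rw [if_pos h4, if_pos (by omega)]; ring
        · rw [if_neg h4, if_neg (by omega)]; ring
    rw [Finset.sum_congr rfl (fun i _ => h1 i), Finset.sum_add_distrib,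
      Finset.sum_ite_eq' Finset.univ i0 f]
    simp
  have hgk : ∀ e : Equiv.Perm (Fin N),
      g k (fun i => x (e i)) = (a e + (x (e i0) - μ)) / ((N : ℝ) - k) := by
    intro e
    simp only [hgdef, ha]
    rw [hsplitf (fun i => x (e i) - μ)]
  have hbsum : ∀ e : Equiv.Perm (Fin N), ∑ m ∈ M, (x (e m) - μ) = - a e := by
    intro e
    have htotal : ∑ i : Fin N, (x (e i) - μ) = 0 := by
      rw [Equiv.sum_comp e (fun i => x i - μ), Finset.sum_sub_distrib, Finset.sum_const,
        Finset.card_univ, Fintype.card_fin, hμ]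
      have hN0 : (N : ℝ) ≠ 0 := by positivity
      rw [nsmul_eq_mul]
      field_simp
      ring
    have hsplit := Finset.sum_filter_add_sum_filter_not Finset.univ
      (fun m : Fin N => k - 1 ≤ (m : ℕ)) (fun m => x (e m) - μ)
    have hcompl : ∑ m ∈ Finset.univ.filter (fun m : Fin N => ¬ k - 1 ≤ (m : ℕ)),
        (x (e m) - μ) = a e := by
      rw [Finset.sum_filter, ha]
      refine Finset.sum_congr rfl (fun i _ => ?_)
      by_cases hi : (i : ℕ) < k - 1
      · rw [if_pos (by omega), if_pos hi]
      · rw [if_neg (by omega), if_neg hi]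
    rw [htotal] at hsplit
    rw [hM]
    linarith [hsplit, hcompl]
  -- the swap trick
  suffices hDzero : ∑ e : Equiv.Perm (Fin N),
      (Set.indicator (W ⁻¹' B) (g k) (fun i => x (e i))
        - Set.indicator (W ⁻¹' B) (g (k - 1)) (fun i => x (e i))) = 0 by
    rw [← sub_eq_zero, ← Finset.sum_sub_distrib]
    exact hDzero
  set D : Equiv.Perm (Fin N) → ℝ := fun e =>
    Set.indicator (W ⁻¹' B) (g k) (fun i => x (e i))
      - Set.indicator (W ⁻¹' B) (g (k - 1)) (fun i => x (e i)) with hD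
  have hkR : (k : ℝ) < N := by exact_mod_cast hkN
  have hNk : ((N : ℝ) - k) ≠ 0 := by linarith
  have hcast : ((k - 1 : ℕ) : ℝ) = (k : ℝ) - 1 := by
    have h1 : (1 : ℕ) ≤ k := by omega
    push_cast [Nat.cast_sub h1]
    ring
  have hNk1 : ((N : ℝ) - ((k : ℝ) - 1)) ≠ 0 := by linarith
  have hsum_swap : ∀ m ∈ M, ∑ e : Equiv.Perm (Fin N), D (e * Equiv.swap i0 m)
      = ∑ e : Equiv.Perm (Fin N), D e := by
    intro m _
    exact Equiv.sum_comp (Equiv.mulRight (Equiv.swap i0 m)) D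
  have hinner : ∀ e : Equiv.Perm (Fin N), ∑ m ∈ M, D (e * Equiv.swap i0 m) = 0 := by
    intro e
    by_cases hB : (fun i => x (e i)) ∈ W ⁻¹' B
    · have hterm : ∀ m ∈ M, D (e * Equiv.swap i0 m)
          = (a e + (x (e m) - μ)) / ((N : ℝ) - k) - a e / ((N : ℝ) - ((k : ℝ) - 1)) := by
        intro m hm
        have hmem : (fun i => x ((e * Equiv.swap i0 m) i)) ∈ W ⁻¹' B := by
          simp only [Set.mem_preimage] at hB ⊢
          rw [W_inv m hm e]
          exact hB
        have he0 : (e * Equiv.swap i0 m) i0 = e m := by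
          rw [Equiv.Perm.mul_apply, Equiv.swap_apply_left]
        rw [hD]
        simp only
        rw [Set.indicator_of_mem hmem, Set.indicator_of_mem hmem,
          hgk _, hgk1 _, a_inv m hm e, he0, hcast]
      rw [Finset.sum_congr rfl hterm, Finset.sum_sub_distrib, ← Finset.sum_div,
        Finset.sum_add_distrib, hbsum e, Finset.sum_const, Finset.sum_const, hMcard]
      have hcard : ((N - (k - 1) : ℕ) : ℝ) = (N : ℝ) - ((k : ℝ) - 1) := by
        rw [Nat.cast_sub (by omega), hcast]
      rw [nsmul_eq_mul, nsmul_eq_mul, hcard]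
      field_simp
      ring
    · have hterm0 : ∀ m ∈ M, D (e * Equiv.swap i0 m) = 0 := by
        intro m hm
        have hnmem : (fun i => x ((e * Equiv.swap i0 m) i)) ∉ W ⁻¹' B := by
          simp only [Set.mem_preimage] at hB ⊢
          rw [W_inv m hm e]
          exact hB
        rw [hD]
        simp only
        rw [Set.indicator_of_notMem hnmem, Set.indicator_of_notMem hnmem]
        ring
      rw [Finset.sum_congr rfl hterm0, Finset.sum_const, smul_zero]
  have hMne : (M.card : ℝ) ≠ 0 := by
    rw [hMcard]
    have : N - (k - 1) ≠ 0 := by omega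
    exact_mod_cast this
  have chain : (M.card : ℝ) * ∑ e : Equiv.Perm (Fin N), D e = 0 := by
    calc (M.card : ℝ) * ∑ e : Equiv.Perm (Fin N), D e
        = ∑ _m ∈ M, ∑ e : Equiv.Perm (Fin N), D e := by
          rw [Finset.sum_const, nsmul_eq_mul]
      _ = ∑ m ∈ M, ∑ e : Equiv.Perm (Fin N), D (e * Equiv.swap i0 m) :=
          Finset.sum_congr rfl (fun m hm => (hsum_swap m hm).symm)
      _ = ∑ e : Equiv.Perm (Fin N), ∑ m ∈ M, D (e * Equiv.swap i0 m) := Finset.sum_comm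
      _ = 0 := by
          rw [Finset.sum_congr rfl (fun e _ => hinner e), Finset.sum_const, smul_zero]
  rcases mul_eq_zero.mp chain with h | h
  · exact absurd h hMne
  · exact h

/-- Forward martingale structure of `Z_k* = (1/(N-k)) ∑_{t=1}^k (X_t - μ)`:
`E[Z_k* | Z_1*, …, Z_{k-1}*] = Z_{k-1}*`. -/
theorem forward_martingale_Zstar
    {Ω : Type*} [MeasurableSpace Ω] (P : Measure Ω) [IsProbabilityMeasure P]
    (N : ℕ) (hN : 2 ≤ N) (x : Fin N → ℝ)
    (X : ℕ → Ω → ℝ) (hXm : ∀ i, Measurable (X i))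
    (hX : samplesWithoutReplacement P N x X)
    (μ : ℝ) (hμ : μ = (∑ i, x i) / N)
    (Zs : ℕ → Ω → ℝ)
    (hZs : ∀ k ω, Zs k ω = (∑ t ∈ Finset.range k, (X t ω - μ)) / ((N : ℝ) - k))
    (k : ℕ) (hk1 : 2 ≤ k) (hk : k ≤ N - 1) :
    MeasureTheory.condExp
        (MeasurableSpace.comap (fun ω (j : Fin (k - 1)) => Zs (j + 1) ω) inferInstance)
        P (Zs k)
      =ᵐ[P] Zs (k - 1) := by
  have hkN : k < N := by omega
  set Y : Ω → Fin N → ℝ := fun ω i => X i ω with hYdef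
  have hYm : Measurable Y := measurable_pi_lambda _ (fun i => hXm i)
  have hX' : Measure.map Y P =
      (Nat.factorial N : ℝ≥0∞)⁻¹ • ∑ e : Equiv.Perm (Fin N),
        Measure.dirac (fun i => x (e i)) := hX
  set g : ℕ → (Fin N → ℝ) → ℝ :=
    fun n v => (∑ i : Fin N, if (i : ℕ) < n then v i - μ else 0) / ((N : ℝ) - n) with hgdef
  have hgm : ∀ n, Measurable (g n) := by
    intro n
    apply Measurable.div_const
    refine Finset.measurable_sum _ (fun i _ => ?_)
    by_cases h : (i : ℕ) < n
    · simp only [h, if_true]; exact (measurable_pi_apply i).sub measurable_const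
    · simp [h]
  have hZg : ∀ n, n ≤ N → ∀ ω, Zs n ω = g n (Y ω) := by
    intro n hn ω
    rw [hZs]
    simp only [hgdef]
    rw [my_sum_trunc hn (fun t => X t ω - μ)]
  set W : (Fin N → ℝ) → (Fin (k - 1) → ℝ) := fun v j => g (j + 1) v with hWdef
  have hWm : Measurable W := measurable_pi_lambda _ (fun j => hgm _)
  set V : Ω → Fin (k - 1) → ℝ := fun ω j => Zs (j + 1) ω with hVdef
  have hVW : V = fun ω => W (Y ω) := by
    funext ω
    funext j
    exact hZg (j + 1) (by have := j.2; omega) ω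
  have hVm : Measurable V := by rw [hVW]; exact hWm.comp hYm
  have hm : MeasurableSpace.comap V inferInstance ≤ ‹MeasurableSpace Ω› :=
    measurable_iff_comap_le.mp hVm
  have hZkg : Zs k = fun ω => g k (Y ω) := funext (hZg k (by omega))
  have hZk1g : Zs (k - 1) = fun ω => g (k - 1) (Y ω) := funext (hZg (k - 1) (by omega))
  have hintP : ∀ h : (Fin N → ℝ) → ℝ, Measurable h → Integrable (fun ω => h (Y ω)) P := by
    intro h hh
    have h1 : Integrable h (Measure.map Y P) := by
      rw [hX']
      exact my_integrable_unif x h hh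
    exact (integrable_map_measure hh.aestronglyMeasurable hYm.aemeasurable).mp h1
  have hiP : ∀ h : (Fin N → ℝ) → ℝ, Measurable h →
      ∫ ω, h (Y ω) ∂P
        = (Nat.factorial N : ℝ)⁻¹ * ∑ e : Equiv.Perm (Fin N), h (fun i => x (e i)) := by
    intro h hh
    rw [← integral_map hYm.aemeasurable hh.aestronglyMeasurable, hX',
      my_integral_unif x h hh]
  have hintk : Integrable (Zs k) P := by rw [hZkg]; exact hintP _ (hgm k)
  have hintk1 : Integrable (Zs (k - 1)) P := by rw [hZk1g]; exact hintP _ (hgm (k - 1))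
  have hmeas' : AEStronglyMeasurable[MeasurableSpace.comap V inferInstance] (Zs (k - 1)) P := by
    have hj : Zs (k - 1) = fun ω => V ω ⟨k - 2, by omega⟩ := by
      funext ω
      rw [hVdef]
      show Zs (k - 1) ω = Zs (k - 2 + 1) ω
      have harg : k - 2 + 1 = k - 1 := by omega
      rw [harg]
    have hVm' : Measurable[MeasurableSpace.comap V inferInstance] V :=
      measurable_iff_comap_le.mpr le_rfl
    have hmeasm : Measurable[MeasurableSpace.comap V inferInstance] (Zs (k - 1)) := by
      rw [hj]
      exact (measurable_pi_apply _).comp hVm'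
    exact hmeasm.stronglyMeasurable.aestronglyMeasurable
  refine (ae_eq_condExp_of_forall_setIntegral_eq hm hintk
    (fun s _ _ => hintk1.integrableOn) ?_ hmeas').symm
  intro s hs _
  obtain ⟨B, hB, rfl⟩ := hs
  have hsm : MeasurableSet (V ⁻¹' B) := hVm hB
  rw [← integral_indicator hsm, ← integral_indicator hsm]
  have eInd : ∀ n, n ≤ N →
      Set.indicator (V ⁻¹' B) (Zs n) = fun ω => Set.indicator (W ⁻¹' B) (g n) (Y ω) := by
    intro n hn
    funext ω
    by_cases hω : Y ω ∈ W ⁻¹' B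
    · have hω' : ω ∈ V ⁻¹' B := by
        simp only [Set.mem_preimage] at hω ⊢
        rw [hVW]
        exact hω
      rw [Set.indicator_of_mem hω', Set.indicator_of_mem hω, hZg n hn]
    · have hω' : ω ∉ V ⁻¹' B := by
        simp only [Set.mem_preimage] at hω ⊢
        rw [hVW]
        exact hω
      rw [Set.indicator_of_notMem hω', Set.indicator_of_notMem hω]
  rw [eInd k (by omega), eInd (k - 1) (by omega),
    hiP _ ((hgm k).indicator (hWm hB)), hiP _ ((hgm (k - 1)).indicator (hWm hB)),
    my_key_comb N k hN hk1 hk x μ hμ g hgdef W hWdef B]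
end

section
/- Let X_1,...,X_N be a uniformly random permutation of a finite population (x_1,...,x_N) with mean μ. Define Z_k = (1/k)∑_{t=1}^k (X_t − μ). Then (Z_k) is a reverse martingale: for 1 ≤ k ≤ N−2, E[Z_k | Z_{k+1},...,Z_{N−1}] = Z_{k+1}. -/
open MeasureTheory Finset Real
open scoped ENNReal

def padFn (N : ℕ) (y : Fin N → ℝ) (t : ℕ) : ℝ := if h : t < N then y ⟨t, h⟩ else 0

noncomputable def ZfFn (N : ℕ) (μ : ℝ) (m : ℕ) (y : Fin N → ℝ) : ℝ :=
  (∑ t ∈ Finset.range m, (padFn N y t - μ)) / m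

lemma padFn_lt {N t : ℕ} (h : t < N) (y : Fin N → ℝ) : padFn N y t = y ⟨t, h⟩ := dif_pos h

lemma measurable_padFn (N t : ℕ) : Measurable (fun y : Fin N → ℝ => padFn N y t) := by
  rcases lt_or_ge t N with h | h
  · have : (fun y : Fin N → ℝ => padFn N y t) = fun y => y ⟨t, h⟩ :=
      funext fun y => dif_pos h
    rw [this]; exact measurable_pi_apply _
  · have : (fun y : Fin N → ℝ => padFn N y t) = fun _ => 0 :=
      funext fun y => dif_neg (not_lt.2 h)
    rw [this]; exact measurable_const

lemma measurable_ZfFn (N : ℕ) (μ : ℝ) (m : ℕ) : Measurable (ZfFn N μ m) := by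
  unfold ZfFn
  exact (Finset.measurable_sum _ fun t _ => (measurable_padFn N t).sub measurable_const).div_const _

lemma sum_padFn {N m : ℕ} (hm : m ≤ N) (y : Fin N → ℝ) :
    ∑ t ∈ Finset.range m, padFn N y t
      = ∑ i ∈ Finset.univ.filter (fun i : Fin N => (i : ℕ) < m), y i := by
  rw [Finset.sum_filter]
  have h2 : ∑ i : Fin N, (if (i : ℕ) < m then y i else 0)
      = ∑ t ∈ Finset.range N, (if t < m then padFn N y t else 0) := by
    rw [← Fin.sum_univ_eq_sum_range (fun t => if t < m then padFn N y t else 0) N]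
    refine Finset.sum_congr rfl fun i _ => ?_
    simp [padFn_lt i.isLt]
  rw [h2]
  have h3 : Finset.range N ∩ Finset.range m = Finset.range m := by
    ext t; simp; omega
  have h4 : ∑ t ∈ Finset.range N, (if t < m then padFn N y t else 0)
      = ∑ t ∈ Finset.range N, (if t ∈ Finset.range m then padFn N y t else 0) := by
    refine Finset.sum_congr rfl fun t _ => ?_
    simp [Finset.mem_range]
  rw [h4, Finset.sum_ite_mem, h3]

lemma Zf_comp_swap {N m : ℕ} (hm : m ≤ N) (μ : ℝ) (y : Fin N → ℝ) (a b : Fin N)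
    (ha : (a : ℕ) < m) (hb : (b : ℕ) < m) :
    ZfFn N μ m (y ∘ Equiv.swap a b) = ZfFn N μ m y := by
  unfold ZfFn
  congr 1
  rw [Finset.sum_sub_distrib, Finset.sum_sub_distrib, sum_padFn hm, sum_padFn hm]
  congr 1
  refine Finset.sum_equiv (Equiv.swap a b) ?_ ?_
  · intro i
    simp only [Finset.mem_filter, Finset.mem_univ, true_and]
    rcases eq_or_ne i a with rfl | h1
    · simp [Equiv.swap_apply_left, ha, hb]
    rcases eq_or_ne i b with rfl | h2
    · simp [Equiv.swap_apply_right, ha, hb]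
    · rw [Equiv.swap_apply_of_ne_of_ne h1 h2]
  · intro i _; rfl

lemma key_sum (N k : ℕ) (x : Fin N → ℝ) (μ : ℝ) (ind : (Fin N → ℝ) → ℝ)
    (hind : ∀ (y : Fin N → ℝ) (a b : Fin N), (a : ℕ) ≤ k → (b : ℕ) ≤ k →
      ind (y ∘ Equiv.swap a b) = ind y)
    (hk1 : 1 ≤ k) (hkN : k + 1 < N) :
    ∑ e : Equiv.Perm (Fin N), ZfFn N μ k (x ∘ ⇑e) * ind (x ∘ ⇑e)
      = ∑ e : Equiv.Perm (Fin N), ZfFn N μ (k + 1) (x ∘ ⇑e) * ind (x ∘ ⇑e) := by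
  set c : ℕ → ℝ :=
    fun t => ∑ e : Equiv.Perm (Fin N), (padFn N (x ∘ ⇑e) t - μ) * ind (x ∘ ⇑e) with hc
  have hswap : ∀ t t' : ℕ, t ≤ k → t' ≤ k → c t = c t' := by
    intro t t' ht ht'
    have htN : t < N := by omega
    have ht'N : t' < N := by omega
    set a : Fin N := ⟨t, htN⟩ with hadef
    set b : Fin N := ⟨t', ht'N⟩ with hbdef
    show (∑ e : Equiv.Perm (Fin N), (padFn N (x ∘ ⇑e) t - μ) * ind (x ∘ ⇑e))
      = ∑ e : Equiv.Perm (Fin N), (padFn N (x ∘ ⇑e) t' - μ) * ind (x ∘ ⇑e)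
    rw [← Equiv.sum_comp (Equiv.mulRight (Equiv.swap a b))
      (fun e : Equiv.Perm (Fin N) => (padFn N (x ∘ ⇑e) t' - μ) * ind (x ∘ ⇑e))]
    refine Finset.sum_congr rfl fun e _ => ?_
    have hcomp : x ∘ ⇑(Equiv.mulRight (Equiv.swap a b) e) = (x ∘ ⇑e) ∘ ⇑(Equiv.swap a b) := by
      funext i
      simp [Equiv.Perm.mul_apply, Function.comp]
    rw [hcomp, hind (x ∘ ⇑e) a b (by simpa [hadef] using ht) (by simpa [hbdef] using ht')]
    congr 2
    rw [padFn_lt htN, padFn_lt ht'N]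
    show (x ∘ ⇑e) a = ((x ∘ ⇑e) ∘ ⇑(Equiv.swap a b)) b
    simp [Equiv.swap_apply_right]
  have expand : ∀ m : ℕ, 1 ≤ m → m ≤ k + 1 →
      ∑ e : Equiv.Perm (Fin N), ZfFn N μ m (x ∘ ⇑e) * ind (x ∘ ⇑e) = c 0 := by
    intro m h1 h2
    have hstep : ∀ e : Equiv.Perm (Fin N), ZfFn N μ m (x ∘ ⇑e) * ind (x ∘ ⇑e)
        = (∑ t ∈ Finset.range m, (padFn N (x ∘ ⇑e) t - μ) * ind (x ∘ ⇑e)) / m := by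
      intro e
      rw [ZfFn, div_mul_eq_mul_div, Finset.sum_mul]
    simp_rw [hstep]
    rw [← Finset.sum_div, Finset.sum_comm]
    have : ∀ t ∈ Finset.range m,
        ∑ e : Equiv.Perm (Fin N), (padFn N (x ∘ ⇑e) t - μ) * ind (x ∘ ⇑e) = c 0 := by
      intro t ht
      exact hswap t 0 (by simp [Finset.mem_range] at ht; omega) (by omega)
    rw [Finset.sum_congr rfl this, Finset.sum_const, Finset.card_range, nsmul_eq_mul]
    have hm0 : (m : ℝ) ≠ 0 := by positivity
    field_simp
  rw [expand k hk1 (by omega), expand (k + 1) (by omega) le_rfl]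

lemma integrable_dirac_meas {α : Type*} [MeasurableSpace α] [MeasurableSingletonClass α]
    {f : α → ℝ} (hf : Measurable f) (a : α) : Integrable f (Measure.dirac a) := by
  refine ⟨hf.aestronglyMeasurable, ?_⟩
  simp [HasFiniteIntegral, lintegral_dirac]


/-- Reverse martingale structure of `Z_k = (1/k) ∑_{t=1}^k (X_t - μ)`:
for `1 ≤ k ≤ N-2`, `E[Z_k | Z_{k+1}, …, Z_{N-1}] = Z_{k+1}`. -/
theorem reverse_martingale_Z
    {Ω : Type*} [MeasurableSpace Ω] (P : Measure Ω) [IsProbabilityMeasure P]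
    (N : ℕ) (hN : 2 ≤ N) (x : Fin N → ℝ)
    (X : ℕ → Ω → ℝ) (hXm : ∀ i, Measurable (X i))
    (hX : samplesWithoutReplacement P N x X)
    (μ : ℝ) (hμ : μ = (∑ i, x i) / N)
    (Z : ℕ → Ω → ℝ)
    (hZ : ∀ k ω, Z k ω = (∑ t ∈ Finset.range k, (X t ω - μ)) / (k : ℝ))
    (k : ℕ) (hk1 : 1 ≤ k) (hk : k ≤ N - 2) :
    MeasureTheory.condExp
        (MeasurableSpace.comap (fun ω (j : Fin (N - 1 - k)) => Z (k + 1 + j) ω) inferInstance)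
        P (Z k)
      =ᵐ[P] Z (k + 1) := by
  have hkN : k + 2 ≤ N := by omega
  -- basic objects
  set Xv : Ω → (Fin N → ℝ) := fun ω (i : Fin N) => X i ω with hXvdef
  have hXvm : Measurable Xv := measurable_pi_lambda _ fun i => hXm i
  have hX' : Measure.map Xv P =
      (Nat.factorial N : ℝ≥0∞)⁻¹ • ∑ e : Equiv.Perm (Fin N), Measure.dirac (fun i => x (e i)) :=
    hX
  set f : Ω → (Fin (N - 1 - k) → ℝ) := fun ω (j : Fin (N - 1 - k)) => Z (k + 1 + j) ω with hfdef
  set F : (Fin N → ℝ) → (Fin (N - 1 - k) → ℝ) := fun y j => ZfFn N μ (k + 1 + (j : ℕ)) y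
    with hFdef
  have hF : Measurable F := measurable_pi_lambda _ fun j => measurable_ZfFn N μ _
  have hZmeas : ∀ m, Measurable (Z m) := by
    intro m
    have : Z m = fun ω => (∑ t ∈ Finset.range m, (X t ω - μ)) / (m : ℝ) := funext (hZ m)
    rw [this]
    exact (Finset.measurable_sum _ fun t _ => (hXm t).sub measurable_const).div_const _
  have hZf : ∀ m, m ≤ N → ∀ ω, Z m ω = ZfFn N μ m (Xv ω) := by
    intro m hm ω
    rw [hZ m ω]
    unfold ZfFn
    congr 1
    refine Finset.sum_congr rfl fun t ht => ?_
    have htN : t < N := lt_of_lt_of_le (Finset.mem_range.1 ht) hm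
    rw [padFn_lt htN]
  have hfF : f = F ∘ Xv := by
    funext ω j
    show Z (k + 1 + (j : ℕ)) ω = ZfFn N μ (k + 1 + (j : ℕ)) (Xv ω)
    exact hZf _ (by have := j.isLt; omega) ω
  have hfm : Measurable f := by rw [hfF]; exact hF.comp hXvm
  have hm : MeasurableSpace.comap f inferInstance ≤ (inferInstance : MeasurableSpace Ω) :=
    hfm.comap_le
  haveI : SigmaFinite (P.trim hm) := inferInstance
  -- a.e. support
  set T : Set (Fin N → ℝ) := ⋃ e : Equiv.Perm (Fin N), {fun i => x (e i)} with hTdef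
  have hTm : MeasurableSet T := MeasurableSet.iUnion fun e => measurableSet_singleton _
  have hae : ∀ᵐ ω ∂P, Xv ω ∈ T := by
    rw [ae_iff]
    have hpre : {ω | ¬ Xv ω ∈ T} = Xv ⁻¹' Tᶜ := rfl
    rw [hpre, ← Measure.map_apply hXvm hTm.compl, hX', Measure.smul_apply,
      Measure.finset_sum_apply]
    have : ∀ e ∈ (Finset.univ : Finset (Equiv.Perm (Fin N))),
        Measure.dirac (fun i => x (e i)) Tᶜ = 0 := by
      intro e _
      rw [Measure.dirac_apply' _ hTm.compl]
      refine Set.indicator_of_notMem ?_ _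
      simp only [Set.mem_compl_iff, not_not, hTdef]
      exact Set.mem_iUnion.2 ⟨e, rfl⟩
    rw [Finset.sum_congr rfl this, Finset.sum_const_zero, smul_zero]
  set C : ℝ := ∑ i, |x i| with hCdef
  have hbound : ∀ m, 1 ≤ m → m ≤ N → ∀ᵐ ω ∂P, ‖Z m ω‖ ≤ C + |μ| := by
    intro m hm1 hmN
    filter_upwards [hae] with ω hω
    obtain ⟨e, he'⟩ : ∃ e : Equiv.Perm (Fin N), (fun i => x (e i)) = Xv ω := by
      simpa [hTdef, Set.mem_iUnion] using hω
    have he : Xv ω = fun i => x (e i) := he'.symm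
    have hXb : ∀ t, t < N → |X t ω| ≤ C := by
      intro t ht
      have : X t ω = x (e ⟨t, ht⟩) := congrFun he ⟨t, ht⟩
      rw [this]
      exact Finset.single_le_sum (f := fun i => |x i|) (fun i _ => abs_nonneg _)
        (Finset.mem_univ _)
    have h1 : |∑ t ∈ Finset.range m, (X t ω - μ)| ≤ m * (C + |μ|) := by
      refine (Finset.abs_sum_le_sum_abs _ _).trans ?_
      have : ∀ t ∈ Finset.range m, |X t ω - μ| ≤ C + |μ| := by
        intro t ht
        have htN : t < N := lt_of_lt_of_le (Finset.mem_range.1 ht) hmN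
        exact (abs_sub _ _).trans (add_le_add (hXb t htN) le_rfl)
      refine (Finset.sum_le_sum this).trans ?_
      rw [Finset.sum_const, Finset.card_range, nsmul_eq_mul]
    have hm0 : (0 : ℝ) < m := by exact_mod_cast hm1
    rw [hZ, Real.norm_eq_abs, abs_div, abs_of_pos hm0]
    rw [div_le_iff₀ hm0]
    calc |∑ t ∈ Finset.range m, (X t ω - μ)| ≤ m * (C + |μ|) := h1
      _ = (C + |μ|) * m := by ring
  have hint : ∀ m, 1 ≤ m → m ≤ N → Integrable (Z m) P := by
    intro m hm1 hmN
    exact Integrable.mono' (integrable_const (C + |μ|)) (hZmeas m).aestronglyMeasurable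
      (hbound m hm1 hmN)
  -- m-measurability of Z (k+1)
  have hgm : AEStronglyMeasurable[MeasurableSpace.comap f inferInstance] (Z (k + 1)) P := by
    have hj0 : (0 : ℕ) < N - 1 - k := by omega
    set j0 : Fin (N - 1 - k) := ⟨0, hj0⟩ with hj0def
    have heq : Z (k + 1) = fun ω => f ω j0 := by
      funext ω
      show Z (k + 1) ω = Z (k + 1 + (j0 : ℕ)) ω
      norm_num [hj0def]
    have hf0 : Measurable[MeasurableSpace.comap f inferInstance] f :=
      Measurable.of_comap_le le_rfl
    have hmeas : Measurable[MeasurableSpace.comap f inferInstance] (fun ω => f ω j0) :=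
      (measurable_pi_apply j0).comp hf0
    rw [heq]
    exact StronglyMeasurable.aestronglyMeasurable hmeas.stronglyMeasurable
  refine (ae_eq_condExp_of_forall_setIntegral_eq hm (hint k hk1 (by omega))
    (fun s _ _ => (hint (k + 1) (by omega) (by omega)).integrableOn) ?_ hgm).symm
  rintro s ⟨A, hA, hpre⟩ -
  -- set-integral identity
  set ind : (Fin N → ℝ) → ℝ := Set.indicator (F ⁻¹' A) (fun _ => (1 : ℝ)) with hinddef
  have hindm : Measurable ind := measurable_const.indicator (hF hA)
  have hIntEq : ∀ m, 1 ≤ m → m ≤ N → ∫ ω in s, Z m ω ∂P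
      = ((N.factorial : ℝ))⁻¹ * ∑ e : Equiv.Perm (Fin N),
          ZfFn N μ m (fun i => x (e i)) * ind (fun i => x (e i)) := by
    intro m hm1 hmN
    have hsA : s = Xv ⁻¹' (F ⁻¹' A) := by
      rw [← hpre, hfF]; rfl
    have hsmeas : MeasurableSet (Xv ⁻¹' (F ⁻¹' A)) := hXvm (hF hA)
    set G : (Fin N → ℝ) → ℝ := fun y => ZfFn N μ m y * ind y with hGdef
    have hGm : Measurable G := (measurable_ZfFn N μ m).mul hindm
    have h1 : ∫ ω in s, Z m ω ∂P = ∫ ω, G (Xv ω) ∂P := by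
      rw [hsA, ← integral_indicator hsmeas]
      refine integral_congr_ae (Filter.Eventually.of_forall fun ω => ?_)
      by_cases h : F (Xv ω) ∈ A
      · simp [Set.indicator, h, hGdef, hinddef, hZf m hmN ω]
      · simp [Set.indicator, h, hGdef, hinddef]
    rw [h1, ← integral_map hXvm.aemeasurable hGm.aestronglyMeasurable, hX',
      integral_smul_measure,
      integral_finset_sum_measure (fun e _ => integrable_dirac_meas hGm _)]
    have h2 : ∀ e ∈ (Finset.univ : Finset (Equiv.Perm (Fin N))),
        ∫ y, G y ∂(Measure.dirac (fun i => x (e i))) = G (fun i => x (e i)) := by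
      intro e _
      exact integral_dirac _ _
    rw [Finset.sum_congr rfl h2]
    have h3 : ((Nat.factorial N : ℝ≥0∞)⁻¹).toReal = ((N.factorial : ℝ))⁻¹ := by
      simp
    rw [h3, smul_eq_mul]
  rw [hIntEq (k + 1) (by omega) (by omega), hIntEq k hk1 (by omega)]
  congr 1
  have hind_swap : ∀ (y : Fin N → ℝ) (a b : Fin N), (a : ℕ) ≤ k → (b : ℕ) ≤ k →
      ind (y ∘ Equiv.swap a b) = ind y := by
    intro y a b ha hb
    have hFy : F (y ∘ Equiv.swap a b) = F y := by
      funext j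
      exact Zf_comp_swap (by have := j.isLt; omega) μ y a b (by omega) (by omega)
    show (F ⁻¹' A).indicator (fun _ => (1:ℝ)) (y ∘ ⇑(Equiv.swap a b))
        = (F ⁻¹' A).indicator (fun _ => (1:ℝ)) y
    by_cases h : F y ∈ A
    · rw [Set.indicator_of_mem (by simpa [Set.mem_preimage, hFy] using h),
        Set.indicator_of_mem (by simpa [Set.mem_preimage] using h)]
    · rw [Set.indicator_of_notMem (by simpa [Set.mem_preimage, hFy] using h),
        Set.indicator_of_notMem (by simpa [Set.mem_preimage] using h)]
  have := key_sum N k x μ ind hind_swap hk1 (by omega)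
  simpa [Function.comp_def] using this.symm
end

section
/- Let X_1,...,X_n be sampled without replacement from a finite population (x_1,...,x_N) with mean μ, minimum a and maximum b, and let Z_n = (1/n)∑_{t=1}^n (X_t − μ). Then for any λ > 0, log E[exp(λ n Z_n)] ≤ ((b−a)²/8) λ² n (1 − (n−1)/N). -/
open MeasureTheory Finset Real
open scoped ENNReal

section SerflingAux


/-- Core of Hoeffding's lemma: `p e^{-qh} + q e^{ph} ≤ e^{h²/8}`. -/
lemma hoeffding_core (p q h : ℝ) (hp : 0 ≤ p) (hq : 0 ≤ q) (hpq : p + q = 1) :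
    p * exp (-(q * h)) + q * exp (p * h) ≤ exp (h ^ 2 / 8) := by
  rcases hp.eq_or_lt with hp0 | hp0
  · have hq1 : q = 1 := by linarith
    have hp0' : p = 0 := hp0.symm
    subst hq1 hp0'
    simpa using one_le_exp (by positivity : (0:ℝ) ≤ h ^ 2 / 8)
  rcases hq.eq_or_lt with hq0 | hq0
  · have hp1 : p = 1 := by linarith
    have hq0' : q = 0 := hq0.symm
    subst hp1 hq0'
    simpa using one_le_exp (by positivity : (0:ℝ) ≤ h ^ 2 / 8)
  -- main case 0 < p, 0 < q
  set D : ℝ → ℝ := fun h => p * exp (-(q * h)) + q * exp (p * h) with hDdef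
  have hD : ∀ y, 0 < D y := fun y => by positivity
  set D' : ℝ → ℝ := fun h => -(p * q) * exp (-(q * h)) + q * p * exp (p * h) with hD'def
  set D'' : ℝ → ℝ := fun h => p * q ^ 2 * exp (-(q * h)) + q * p ^ 2 * exp (p * h) with hD''def
  have hDd : ∀ y, HasDerivAt D (D' y) y := by
    intro y
    have h1 : HasDerivAt (fun y : ℝ => exp (-(q * y))) (-q * exp (-(q * y))) y := by
      have := (((hasDerivAt_id y).const_mul q).neg).exp
      simpa [mul_comm] using this
    have h2 : HasDerivAt (fun y : ℝ => exp (p * y)) (p * exp (p * y)) y := by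
      have := ((hasDerivAt_id y).const_mul p).exp
      simpa [mul_comm] using this
    have := (h1.const_mul p).add (h2.const_mul q)
    exact this.congr_deriv (by simp only [hD'def]; ring)
  have hD'd : ∀ y, HasDerivAt D' (D'' y) y := by
    intro y
    have h1 : HasDerivAt (fun y : ℝ => exp (-(q * y))) (-q * exp (-(q * y))) y := by
      have := (((hasDerivAt_id y).const_mul q).neg).exp
      simpa [mul_comm] using this
    have h2 : HasDerivAt (fun y : ℝ => exp (p * y)) (p * exp (p * y)) y := by
      have := ((hasDerivAt_id y).const_mul p).exp
      simpa [mul_comm] using this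
    have := (h1.const_mul (-(p*q))).add (h2.const_mul (q*p))
    exact this.congr_deriv (by simp only [hD''def]; ring)
  set φ : ℝ → ℝ := fun y => y / 4 - D' y / D y with hφdef
  have hφd : ∀ y, HasDerivAt φ (1/4 - (D'' y * D y - D' y ^ 2) / (D y) ^ 2) y := by
    intro y
    have hdiv : HasDerivAt (fun y => D' y / D y)
        ((D'' y * D y - D' y * D' y) / (D y) ^ 2) y := (hD'd y).div (hDd y) (hD y).ne'
    have hid : HasDerivAt (fun y : ℝ => y / 4) (1/4) y := by
      simpa using (hasDerivAt_id y).div_const 4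
    have := hid.sub hdiv
    exact this.congr_deriv (by ring)
  have hψ : ∀ y, 0 ≤ 1/4 - (D'' y * D y - D' y ^ 2) / (D y) ^ 2 := by
    intro y
    set A := exp (-(q * y)) with hA
    set B := exp (p * y) with hB
    have hA0 : 0 < A := exp_pos _
    have hB0 : 0 < B := exp_pos _
    have hnum : D'' y * D y - D' y ^ 2 = p * q * (A * B) := by
      simp only [hDdef, hD'def, hD''def]
      linear_combination (p * q * A * B * (p + q + 1)) * hpq
    rw [hnum]
    rw [sub_nonneg, div_le_iff₀ (by positivity)]
    have : 0 ≤ (p * A - q * B)^2 := sq_nonneg _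
    simp only [hDdef]
    nlinarith [sq_nonneg (p * A - q * B)]
  have hφmono : Monotone φ := monotone_of_hasDerivAt_nonneg hφd hψ
  have hφ0 : φ 0 = 0 := by
    have hD'0 : D' 0 = 0 := by simp only [hD'def]; norm_num; ring
    simp [hφdef, hD'0]
  set G : ℝ → ℝ := fun y => y ^ 2 / 8 - log (D y) with hGdef
  have hGd : ∀ y, HasDerivAt G (φ y) y := by
    intro y
    have h1 : HasDerivAt (fun y : ℝ => y ^ 2 / 8) (y / 4) y := by
      have := (hasDerivAt_pow 2 y).div_const 8
      exact this.congr_deriv (by norm_num; ring)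
    have h2 : HasDerivAt (fun y => log (D y)) (D' y / D y) y := (hDd y).log (hD y).ne'
    exact h1.sub h2
  have hG0 : G 0 = 0 := by
    simp only [hGdef, hDdef]
    norm_num [hpq]
  have hGcont : Continuous G := by
    rw [continuous_iff_continuousAt]
    exact fun y => (hGd y).continuousAt
  have hGy : ∀ y, 0 ≤ G y := by
    intro y
    rcases le_total 0 y with hy | hy
    · have hmono : MonotoneOn G (Set.Ici 0) := by
        apply monotoneOn_of_deriv_nonneg (convex_Ici 0) hGcont.continuousOn
          (fun z _ => (hGd z).differentiableAt.differentiableWithinAt)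
        intro z hz
        rw [(hGd z).deriv]
        rw [interior_Ici] at hz
        have := hφmono (le_of_lt hz)
        rw [hφ0] at this; exact this
      have := hmono Set.self_mem_Ici hy hy
      rwa [hG0] at this
    · have hanti : AntitoneOn G (Set.Iic 0) := by
        apply antitoneOn_of_deriv_nonpos (convex_Iic 0) hGcont.continuousOn
          (fun z _ => (hGd z).differentiableAt.differentiableWithinAt)
        intro z hz
        rw [(hGd z).deriv]
        rw [interior_Iic] at hz
        have := hφmono (le_of_lt hz)
        rw [hφ0] at this; exact this
      have := hanti hy Set.self_mem_Iic hy
      rwa [hG0] at this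
  have hGh := hGy h
  simp only [hGdef] at hGh
  have hle : log (D h) ≤ h ^ 2 / 8 := by linarith
  exact (log_le_iff_le_exp (hD h)).mp hle

/-- Hoeffding's lemma for a uniform average over a finite set. -/
lemma hoeffding_finset {ι : Type*} (s : Finset ι) (hs : s.Nonempty) (y : ι → ℝ) (a b t : ℝ)
    (hy : ∀ i ∈ s, y i ∈ Set.Icc a b) :
    ∑ i ∈ s, exp (t * y i) ≤
      s.card * exp (t * ((∑ i ∈ s, y i) / s.card) + t ^ 2 * (b - a) ^ 2 / 8) := by
  have hcard : (0:ℝ) < s.card := by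
    exact_mod_cast Finset.card_pos.mpr hs
  set S : ℝ := ∑ i ∈ s, y i with hSdef
  set m : ℝ := S / s.card with hmdef
  have hS : S = s.card * m := by rw [hmdef]; field_simp
  obtain ⟨i0, hi0⟩ := hs
  have hab : a ≤ b := le_trans (hy i0 hi0).1 (hy i0 hi0).2
  have hma : a ≤ m := by
    have : s.card • a ≤ S := Finset.card_nsmul_le_sum s y a (fun i hi => (hy i hi).1)
    rw [nsmul_eq_mul] at this
    rw [hmdef]; rw [le_div_iff₀ hcard]; linarith
  have hmb : m ≤ b := by
    have : S ≤ s.card • b := Finset.sum_le_card_nsmul s y b (fun i hi => (hy i hi).2)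
    rw [nsmul_eq_mul] at this
    rw [hmdef]; rw [div_le_iff₀ hcard]; linarith
  rcases eq_or_lt_of_le hab with hab' | hab'
  · -- degenerate case a = b : all values equal
    have hyi : ∀ i ∈ s, y i = m := by
      intro i hi
      have h1 := (hy i hi).1
      have h2 := (hy i hi).2
      have : y i = a := by linarith [hab'.ge, hab'.le]
      linarith
    calc ∑ i ∈ s, exp (t * y i) = ∑ i ∈ s, exp (t * m) := by
          exact Finset.sum_congr rfl (fun i hi => by rw [hyi i hi])
      _ = s.card * exp (t * m) := by rw [Finset.sum_const, nsmul_eq_mul]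
      _ ≤ s.card * exp (t * m + t ^ 2 * (b - a) ^ 2 / 8) := by
          exact mul_le_mul_of_nonneg_left (exp_le_exp.mpr (by nlinarith [sq_nonneg (t*(b-a))])) (Nat.cast_nonneg _)
  · -- main case a < b
    have hba : (0:ℝ) < b - a := by linarith
    set p : ℝ := (b - m) / (b - a) with hpdef
    set q : ℝ := (m - a) / (b - a) with hqdef
    have hp : 0 ≤ p := div_nonneg (by linarith) hba.le
    have hq : 0 ≤ q := div_nonneg (by linarith) hba.le
    have hpq : p + q = 1 := by rw [hpdef, hqdef, ← add_div, div_eq_one_iff_eq hba.ne']; ring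
    set Ea : ℝ := exp (t * a) with hEadef
    set Eb : ℝ := exp (t * b) with hEbdef
    have h1 : ∀ i ∈ s, exp (t * y i) ≤ (b - y i)/(b-a) * Ea + (y i - a)/(b-a) * Eb := by
      intro i hi
      obtain ⟨hai, hib⟩ := hy i hi
      have hθ1 : (0:ℝ) ≤ (b - y i)/(b-a) := div_nonneg (by linarith) hba.le
      have hθ2 : (0:ℝ) ≤ (y i - a)/(b-a) := div_nonneg (by linarith) hba.le
      have hθs : (b - y i)/(b-a) + (y i - a)/(b-a) = 1 := by field_simp; ring
      have := convexOn_exp.2 (Set.mem_univ (t*a)) (Set.mem_univ (t*b)) hθ1 hθ2 hθs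
      simp only [smul_eq_mul] at this
      have harg : (b - y i)/(b-a) * (t*a) + (y i - a)/(b-a) * (t*b) = t * y i := by
        field_simp; ring
      rw [harg] at this
      exact this
    have h2 : ∑ i ∈ s, exp (t * y i) ≤ s.card * (p * Ea + q * Eb) := by
      calc ∑ i ∈ s, exp (t * y i)
          ≤ ∑ i ∈ s, ((b - y i)/(b-a) * Ea + (y i - a)/(b-a) * Eb) := Finset.sum_le_sum h1
        _ = ∑ i ∈ s, ((b * Ea - a * Eb)/(b-a) + y i * ((Eb - Ea)/(b-a))) := by
            refine Finset.sum_congr rfl (fun i _ => ?_)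
            field_simp; ring
        _ = s.card * ((b * Ea - a * Eb)/(b-a)) + S * ((Eb - Ea)/(b-a)) := by
            rw [Finset.sum_add_distrib, Finset.sum_const, nsmul_eq_mul, ← Finset.sum_mul]
        _ = s.card * (p * Ea + q * Eb) := by
            rw [hS, hpdef, hqdef]; ring
    have hEa : Ea = exp (t * m) * exp (-(q * (t * (b-a)))) := by
      rw [hEadef, ← exp_add]
      congr 1
      rw [hqdef]; field_simp; ring
    have hEb : Eb = exp (t * m) * exp (p * (t * (b-a))) := by
      rw [hEbdef, ← exp_add]
      congr 1
      rw [hpdef]; field_simp; ring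
    have hcore := hoeffding_core p q (t * (b - a)) hp hq hpq
    have h3 : p * Ea + q * Eb ≤ exp (t * m + t ^ 2 * (b - a) ^ 2 / 8) := by
      rw [hEa, hEb]
      have : p * (exp (t*m) * exp (-(q * (t * (b-a))))) + q * (exp (t*m) * exp (p * (t * (b-a))))
          = exp (t*m) * (p * exp (-(q * (t * (b-a)))) + q * exp (p * (t * (b-a)))) := by ring
      rw [this, exp_add]
      refine mul_le_mul_of_nonneg_left ?_ (exp_pos _).le
      calc p * exp (-(q * (t * (b-a)))) + q * exp (p * (t * (b-a)))
          ≤ exp ((t * (b-a)) ^ 2 / 8) := hcore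
        _ = exp (t ^ 2 * (b - a) ^ 2 / 8) := by congr 1; ring
    calc ∑ i ∈ s, exp (t * y i) ≤ s.card * (p * Ea + q * Eb) := h2
      _ ≤ s.card * exp (t * m + t ^ 2 * (b - a) ^ 2 / 8) := mul_le_mul_of_nonneg_left h3 (Nat.cast_nonneg _)

lemma card_filter_val_lt (N m : ℕ) (hm : m ≤ N) :
    (Finset.univ.filter (fun j : Fin N => (j:ℕ) < m)).card = m := by
  have h : (Finset.univ.filter (fun j : Fin N => (j:ℕ) < m)).card = (Finset.range m).card := by
    refine Finset.card_nbij (fun j => (j:ℕ)) ?_ ?_ ?_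
    · intro x hx; simp at hx ⊢; omega
    · intro x _ y _ h; exact Fin.ext h
    · intro j hj
      simp at hj ⊢
      exact ⟨⟨j, by omega⟩, by simp [hj], rfl⟩
  simpa using h

/-- Partial centered sum over the first `m` positions of a permuted population. -/
def sPart {N : ℕ} (x : Fin N → ℝ) (μ : ℝ) (m : ℕ) (e : Equiv.Perm (Fin N)) : ℝ :=
  ∑ j ∈ Finset.univ.filter (fun j : Fin N => (j:ℕ) < m), (x (e j) - μ)

lemma serfling_step {N : ℕ} (x : Fin N → ℝ) (μ a b : ℝ)
    (hμ0 : ∑ i, (x i - μ) = 0)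
    (hax : ∀ i, x i ∈ Set.Icc a b)
    (k : ℕ) (hk : k < N) (t : ℝ) :
    ∑ e : Equiv.Perm (Fin N), exp (t * sPart x μ (k+1) e)
      ≤ exp (t^2 * (b-a)^2/8) *
        ∑ e : Equiv.Perm (Fin N), exp ((t * (((N:ℝ) - k - 1)/((N:ℝ) - k))) * sPart x μ k e) := by
  have hd : (0:ℝ) < (N:ℝ) - k := by
    have : (k:ℝ) < N := by exact_mod_cast hk
    linarith
  set p : Fin N := ⟨k, hk⟩ with hpdef
  have hpval : (p:ℕ) = k := rfl
  set M : Finset (Fin N) := Finset.univ.filter (fun m : Fin N => ¬ ((m:ℕ) < k)) with hMdef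
  have hpM : p ∈ M := by simp [hMdef, hpval]
  have hMcard : M.card = N - k := by
    rw [hMdef, Finset.filter_not, Finset.card_sdiff_of_subset (Finset.filter_subset _ _),
      card_filter_val_lt N k hk.le]
    simp
  have hMcardR : (M.card : ℝ) = (N:ℝ) - k := by
    rw [hMcard]; push_cast [hk.le]; ring
  have hMne : M.Nonempty := ⟨p, hpM⟩
  have hMpos : (0:ℝ) < (M.card : ℝ) := by rw [hMcardR]; exact hd
  -- (i) splitting off position p
  have hsplit : ∀ e : Equiv.Perm (Fin N),
      sPart x μ (k+1) e = sPart x μ k e + (x (e p) - μ) := by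
    intro e
    unfold sPart
    have hins : Finset.univ.filter (fun j : Fin N => (j:ℕ) < k+1)
        = insert p (Finset.univ.filter (fun j : Fin N => (j:ℕ) < k)) := by
      ext j
      simp only [Finset.mem_filter, Finset.mem_univ, true_and, Finset.mem_insert,
        Fin.ext_iff, hpval]
      omega
    rw [hins, Finset.sum_insert (by simp [hpval])]
    ring
  -- (ii) invariance of the first k positions under swaps inside M
  have hswap : ∀ (e : Equiv.Perm (Fin N)) (m : Fin N), m ∈ M →
      sPart x μ k (e * Equiv.swap p m) = sPart x μ k e := by
    intro e m hm
    unfold sPart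
    refine Finset.sum_congr rfl (fun j hj => ?_)
    simp only [Finset.mem_filter, Finset.mem_univ, true_and] at hj
    simp only [hMdef, Finset.mem_filter, Finset.mem_univ, true_and] at hm
    have hjp : j ≠ p := by
      intro h; rw [h] at hj; omega
    have hjm : j ≠ m := by
      intro h; rw [h] at hj; omega
    rw [Equiv.Perm.mul_apply, Equiv.swap_apply_of_ne_of_ne hjp hjm]
  have hswapp : ∀ (e : Equiv.Perm (Fin N)) (m : Fin N),
      (e * Equiv.swap p m) p = e m := by
    intro e m; rw [Equiv.Perm.mul_apply, Equiv.swap_apply_left]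
  -- (iv) complement sum
  have hcompl : ∀ e : Equiv.Perm (Fin N), ∑ m ∈ M, (x (e m) - μ) = - sPart x μ k e := by
    intro e
    have htot : ∑ j : Fin N, (x (e j) - μ) = 0 := by
      rw [Equiv.sum_comp e (fun i => x i - μ)]; exact hμ0
    have hpart := Finset.sum_filter_add_sum_filter_not Finset.univ
      (fun j : Fin N => (j:ℕ) < k) (fun j => x (e j) - μ)
    unfold sPart
    rw [hMdef]
    linarith [hpart, htot]
  -- key exchange identity
  have key : (M.card : ℝ) * ∑ e : Equiv.Perm (Fin N), exp (t * sPart x μ (k+1) e)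
      = ∑ e : Equiv.Perm (Fin N),
          exp (t * sPart x μ k e) * ∑ m ∈ M, exp (t * (x (e m) - μ)) := by
    calc (M.card : ℝ) * ∑ e : Equiv.Perm (Fin N), exp (t * sPart x μ (k+1) e)
        = ∑ _m ∈ M, ∑ e : Equiv.Perm (Fin N), exp (t * sPart x μ (k+1) e) := by
          rw [Finset.sum_const, nsmul_eq_mul]
      _ = ∑ m ∈ M, ∑ e : Equiv.Perm (Fin N),
            exp (t * sPart x μ (k+1) (e * Equiv.swap p m)) := by
          refine Finset.sum_congr rfl (fun m _ => ?_)
          exact (Fintype.sum_equiv (Equiv.mulRight (Equiv.swap p m)) _ _ (fun e => rfl)).symm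
      _ = ∑ m ∈ M, ∑ e : Equiv.Perm (Fin N),
            exp (t * sPart x μ k e) * exp (t * (x (e m) - μ)) := by
          refine Finset.sum_congr rfl (fun m hm => Finset.sum_congr rfl (fun e _ => ?_))
          rw [hsplit, hswap e m hm, hswapp, mul_add, exp_add]
      _ = ∑ e : Equiv.Perm (Fin N),
            exp (t * sPart x μ k e) * ∑ m ∈ M, exp (t * (x (e m) - μ)) := by
          rw [Finset.sum_comm]
          exact Finset.sum_congr rfl (fun e _ => (Finset.mul_sum _ _ _).symm)
  -- pointwise bound via Hoeffding's lemma
  have main : ∀ e : Equiv.Perm (Fin N),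
      exp (t * sPart x μ k e) * ∑ m ∈ M, exp (t * (x (e m) - μ))
      ≤ (M.card : ℝ) * (exp (t^2 * (b-a)^2/8) *
          exp ((t * (((N:ℝ) - k - 1)/((N:ℝ) - k))) * sPart x μ k e)) := by
    intro e
    have hb := hoeffding_finset M hMne (fun m => x (e m) - μ) (a - μ) (b - μ) t
      (fun m _ => ⟨sub_le_sub_right (hax (e m)).1 μ, sub_le_sub_right (hax (e m)).2 μ⟩)
    simp only [hcompl e] at hb
    have h2 := mul_le_mul_of_nonneg_left hb (exp_pos (t * sPart x μ k e)).le
    refine h2.trans (le_of_eq ?_)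
    rw [hMcardR]
    set s0 := sPart x μ k e
    rw [mul_comm (exp (t * s0)), mul_assoc, ← exp_add, ← exp_add]
    congr 1
    rw [exp_eq_exp]
    field_simp
    ring
  have hsum := Finset.sum_le_sum (fun e (_ : e ∈ Finset.univ) => main e)
  rw [← key] at hsum
  rw [← Finset.mul_sum, ← Finset.mul_sum] at hsum
  exact le_of_mul_le_mul_left hsum hMpos

lemma key_sum_s8 (M : ℕ) (hM : 1 ≤ M) (N : ℕ) (hMN : M ≤ N) :
    ∑ m ∈ Finset.Ico M N, (1:ℝ)/(m:ℝ)^2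
      ≤ ((N:ℝ) - M) * ((M:ℝ) + 1) / ((N:ℝ) * (M:ℝ)^2) := by
  induction N, hMN using Nat.le_induction with
  | base => simp
  | succ N hMN ih =>
    rw [Finset.sum_Ico_succ_top hMN]
    have hM1 : (1:ℝ) ≤ (M:ℝ) := by exact_mod_cast hM
    have hN1 : (1:ℝ) ≤ (N:ℝ) := by exact_mod_cast hM.trans hMN
    have hMN' : (M:ℝ) ≤ (N:ℝ) := by exact_mod_cast hMN
    have hdiff : (((N:ℝ)+1) - M) * ((M:ℝ)+1) / (((N:ℝ)+1) * (M:ℝ)^2)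
        - (((N:ℝ) - M) * ((M:ℝ)+1) / ((N:ℝ) * (M:ℝ)^2) + 1/(N:ℝ)^2)
        = ((N:ℝ) - M) / ((N:ℝ)^2 * ((N:ℝ)+1) * (M:ℝ)) := by
      field_simp
      ring
    have hpos : 0 ≤ ((N:ℝ) - M) / ((N:ℝ)^2 * ((N:ℝ)+1) * (M:ℝ)) := by
      apply div_nonneg (by linarith)
      positivity
    push_cast
    linarith

lemma serfling_unroll {N n : ℕ} (x : Fin N → ℝ) (μ a b l : ℝ)
    (hμ0 : ∑ i, (x i - μ) = 0) (hax : ∀ i, x i ∈ Set.Icc a b)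
    (hn : n < N) :
    ∀ k, k ≤ n →
    ∑ e : Equiv.Perm (Fin N), exp ((l * ((N:ℝ) - n) / ((N:ℝ) - k)) * sPart x μ k e)
      ≤ (Nat.factorial N : ℝ) *
        exp ((b-a)^2/8 * l^2 * ((N:ℝ) - n)^2 * ∑ m ∈ Finset.Ico (N-k) N, (1:ℝ)/(m:ℝ)^2) := by
  intro k
  induction k with
  | zero =>
    intro _
    have hs0 : ∀ e : Equiv.Perm (Fin N), sPart x μ 0 e = 0 := by
      intro e; unfold sPart; simp
    simp only [hs0, Nat.cast_zero, mul_zero, exp_zero, Nat.sub_zero, Finset.Ico_self,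
      Finset.sum_empty, Finset.sum_const, Finset.card_univ, nsmul_eq_mul, mul_one]
    rw [Fintype.card_perm, Fintype.card_fin]
  | succ k ih =>
    intro hk1
    have hkn : k ≤ n := Nat.le_of_succ_le hk1
    have hkN : k < N := lt_of_lt_of_le (Nat.lt_of_lt_of_le (Nat.lt_succ_self k) hk1) hn.le
    have hk1N : k + 1 < N := Nat.lt_of_le_of_lt hk1 hn
    have hdk : (0:ℝ) < (N:ℝ) - k := by
      have : (k:ℝ) < N := by exact_mod_cast hkN
      linarith
    have hdk1 : (0:ℝ) < (N:ℝ) - k - 1 := by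
      have : ((k:ℝ) + 1) < N := by exact_mod_cast hk1N
      linarith
    set t : ℝ := l * ((N:ℝ) - n) / ((N:ℝ) - k - 1) with htdef
    have hstep := serfling_step x μ a b hμ0 hax k hkN t
    have harg : t * (((N:ℝ) - k - 1)/((N:ℝ) - k)) = l * ((N:ℝ) - n) / ((N:ℝ) - k) := by
      rw [htdef]; field_simp
    have hLHS : ∀ e : Equiv.Perm (Fin N),
        (l * ((N:ℝ) - (k+1:ℕ)) / ((N:ℝ) - (k+1:ℕ))) = 1 → True := fun _ _ => trivial
    have hcast : ((k+1:ℕ):ℝ) = (k:ℝ) + 1 := by push_cast; ring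
    calc ∑ e : Equiv.Perm (Fin N), exp ((l * ((N:ℝ) - n) / ((N:ℝ) - (k+1:ℕ))) * sPart x μ (k+1) e)
        = ∑ e : Equiv.Perm (Fin N), exp (t * sPart x μ (k+1) e) := by
          have hrr : (N:ℝ) - ((k:ℝ) + 1) = (N:ℝ) - k - 1 := by ring
          rw [hcast, hrr, htdef]
      _ ≤ exp (t^2 * (b-a)^2/8) *
            ∑ e : Equiv.Perm (Fin N), exp ((t * (((N:ℝ) - k - 1)/((N:ℝ) - k))) * sPart x μ k e) :=
          hstep
      _ ≤ exp (t^2 * (b-a)^2/8) * ((Nat.factorial N : ℝ) *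
            exp ((b-a)^2/8 * l^2 * ((N:ℝ) - n)^2 * ∑ m ∈ Finset.Ico (N-k) N, (1:ℝ)/(m:ℝ)^2)) := by
          rw [harg]
          exact mul_le_mul_of_nonneg_left (ih hkn) (exp_pos _).le
      _ = (Nat.factorial N : ℝ) *
            exp ((b-a)^2/8 * l^2 * ((N:ℝ) - n)^2 *
              ∑ m ∈ Finset.Ico (N-(k+1)) N, (1:ℝ)/(m:ℝ)^2) := by
          have hins : Finset.Ico (N-(k+1)) N = insert (N-(k+1)) (Finset.Ico (N-k) N) := by
            have h1 : N - k = (N - (k+1)) + 1 := by omega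
            rw [h1]
            exact (Finset.insert_Ico_add_one_left_eq_Ico (by omega)).symm
          rw [hins, Finset.sum_insert (by simp; omega),
            mul_comm (exp (t^2 * (b-a)^2/8)), mul_assoc, ← exp_add]
          congr 1
          rw [exp_eq_exp]
          have hc2 : ((N - (k+1) : ℕ) : ℝ) = (N:ℝ) - k - 1 := by
            have : ((N - (k+1) : ℕ) : ℝ) = (N:ℝ) - ((k+1:ℕ):ℝ) := by
              rw [Nat.cast_sub hk1N.le]
            rw [this, hcast]; ring
          rw [htdef, hc2]
          field_simp
          ring

end SerflingAux

/-- Serfling's moment-generating-function bound: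
`log E[exp(λ n Z_n)] ≤ ((b-a)²/8) λ² n (1 - (n-1)/N)`, where `n Z_n = ∑_{t=1}^n (X_t - μ)`. -/
theorem serfling_mgf_bound
    {Ω : Type*} [MeasurableSpace Ω] (P : Measure Ω) [IsProbabilityMeasure P]
    (N n : ℕ) (hN : 2 ≤ N) (hn1 : 1 ≤ n) (hn : n < N) (x : Fin N → ℝ)
    (X : ℕ → Ω → ℝ) (hXm : ∀ i, Measurable (X i))
    (hX : samplesWithoutReplacement P N x X)
    (a b : ℝ) (ha : IsLeast (Set.range x) a) (hb : IsGreatest (Set.range x) b)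
    (μ : ℝ) (hμ : μ = (∑ i, x i) / N)
    (l : ℝ) (hl : 0 < l) :
    Real.log (∫ ω, Real.exp (l * ∑ t ∈ Finset.range n, (X t ω - μ)) ∂P) ≤
      (b - a) ^ 2 / 8 * l ^ 2 * n * (1 - ((n : ℝ) - 1) / N) := by
  have hNR : (0:ℝ) < N := by
    have : 0 < N := by omega
    exact_mod_cast this
  have hμ0 : ∑ i, (x i - μ) = 0 := by
    rw [Finset.sum_sub_distrib, Finset.sum_const, Finset.card_univ, Fintype.card_fin, hμ,
      nsmul_eq_mul]
    field_simp
    ring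
  have hax : ∀ i, x i ∈ Set.Icc a b :=
    fun i => ⟨ha.2 (Set.mem_range_self i), hb.2 (Set.mem_range_self i)⟩
  set φ : Ω → (Fin N → ℝ) := fun ω (i : Fin N) => X i ω with hφdef
  have hφm : Measurable φ := measurable_pi_lambda _ (fun i => hXm i)
  set g : (Fin N → ℝ) → ℝ := fun v =>
    Real.exp (l * ∑ j ∈ Finset.univ.filter (fun j : Fin N => (j:ℕ) < n), (v j - μ)) with hgdef
  have hgm : Measurable g := by
    have hsum : Measurable (fun v : Fin N → ℝ =>
        ∑ j ∈ Finset.univ.filter (fun j : Fin N => (j:ℕ) < n), (v j - μ)) :=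
      Finset.measurable_sum _ (fun j _ => (measurable_pi_apply j).sub measurable_const)
    exact Real.measurable_exp.comp (hsum.const_mul l)
  have hcomp : ∀ ω, Real.exp (l * ∑ t ∈ Finset.range n, (X t ω - μ)) = g (φ ω) := by
    intro ω
    have hsum : ∑ t ∈ Finset.range n, (X t ω - μ)
        = ∑ j ∈ Finset.univ.filter (fun j : Fin N => (j:ℕ) < n), (φ ω j - μ) := by
      refine Finset.sum_bij' (i := fun t ht => (⟨t, lt_trans (Finset.mem_range.mp ht) hn⟩ : Fin N))
        (j := fun m _ => (m : ℕ)) ?_ ?_ ?_ ?_ ?_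
      · intro t ht
        simp only [Finset.mem_filter, Finset.mem_univ, true_and]
        exact Finset.mem_range.mp ht
      · intro m hm
        simp only [Finset.mem_filter, Finset.mem_univ, true_and] at hm
        exact Finset.mem_range.mpr hm
      · intro t ht; rfl
      · intro m hm; rfl
      · intro t ht; rfl
    rw [hgdef]
    simp only []
    rw [hsum]
  have hInt : ∀ e : Equiv.Perm (Fin N),
      Integrable g (Measure.dirac (fun i => x (e i))) := by
    intro e
    refine ⟨hgm.aestronglyMeasurable, ?_⟩
    simp [HasFiniteIntegral, lintegral_dirac]
  have hE : ∫ ω, Real.exp (l * ∑ t ∈ Finset.range n, (X t ω - μ)) ∂P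
      = (Nat.factorial N : ℝ)⁻¹ * ∑ e : Equiv.Perm (Fin N), Real.exp (l * sPart x μ n e) := by
    calc ∫ ω, Real.exp (l * ∑ t ∈ Finset.range n, (X t ω - μ)) ∂P
        = ∫ ω, g (φ ω) ∂P := by
          exact integral_congr_ae (Filter.Eventually.of_forall hcomp)
      _ = ∫ v, g v ∂(Measure.map φ P) :=
          (integral_map hφm.aemeasurable hgm.aestronglyMeasurable).symm
      _ = ∫ v, g v ∂((Nat.factorial N : ℝ≥0∞)⁻¹ •
            ∑ e : Equiv.Perm (Fin N), Measure.dirac (fun i => x (e i))) := by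
          rw [hφdef, hX]
      _ = ((Nat.factorial N : ℝ≥0∞)⁻¹).toReal *
            ∑ e : Equiv.Perm (Fin N), ∫ v, g v ∂(Measure.dirac (fun i => x (e i))) := by
          rw [integral_smul_measure, integral_finset_sum_measure (fun e _ => hInt e),
            smul_eq_mul]
      _ = (Nat.factorial N : ℝ)⁻¹ * ∑ e : Equiv.Perm (Fin N), Real.exp (l * sPart x μ n e) := by
          congr 1
          · rw [ENNReal.toReal_inv]
            simp
          · refine Finset.sum_congr rfl (fun e _ => ?_)
            rw [integral_dirac]
            rfl
  have hfac : (0:ℝ) < (Nat.factorial N : ℝ) := by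
    exact_mod_cast Nat.factorial_pos N
  have hsumpos : 0 < ∑ e : Equiv.Perm (Fin N), Real.exp (l * sPart x μ n e) :=
    Finset.sum_pos (fun e _ => Real.exp_pos _) Finset.univ_nonempty
  have hdn : (0:ℝ) < (N:ℝ) - n := by
    have : (n:ℝ) < N := by exact_mod_cast hn
    linarith
  have hmain := serfling_unroll x μ a b l hμ0 hax hn n le_rfl
  have hl1 : l * ((N:ℝ) - n) / ((N:ℝ) - n) = l := by field_simp
  rw [hl1] at hmain
  set Sig0 : ℝ := ∑ m ∈ Finset.Ico (N-n) N, (1:ℝ)/(m:ℝ)^2 with hSig0def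
  have hEle : (Nat.factorial N : ℝ)⁻¹ * ∑ e : Equiv.Perm (Fin N), Real.exp (l * sPart x μ n e)
      ≤ Real.exp ((b-a)^2/8 * l^2 * ((N:ℝ) - n)^2 * Sig0) := by
    rw [inv_mul_le_iff₀ hfac]
    exact hmain
  have hcastNn : ((N - n : ℕ) : ℝ) = (N:ℝ) - n := by
    rw [Nat.cast_sub hn.le]
  have hks := key_sum_s8 (N - n) (by omega) N (by omega)
  rw [hcastNn] at hks
  have hfinal : (b-a)^2/8 * l^2 * ((N:ℝ) - n)^2 * Sig0
      ≤ (b - a) ^ 2 / 8 * l ^ 2 * n * (1 - ((n : ℝ) - 1) / N) := by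
    have hc : (0:ℝ) ≤ (b-a)^2/8 * l^2 := by positivity
    have h1 : (b-a)^2/8 * l^2 * ((N:ℝ) - n)^2 * Sig0
        ≤ (b-a)^2/8 * l^2 * ((N:ℝ) - n)^2 *
          (((N:ℝ) - ((N:ℝ) - n)) * (((N:ℝ) - n) + 1) / ((N:ℝ) * ((N:ℝ) - n)^2)) := by
      have hc2 : (0:ℝ) ≤ (b-a)^2/8 * l^2 * ((N:ℝ) - n)^2 := by positivity
      exact mul_le_mul_of_nonneg_left hks hc2
    refine h1.trans (le_of_eq ?_)
    field_simp
    ring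
  rw [hE]
  have hpos : 0 < (Nat.factorial N : ℝ)⁻¹ *
      ∑ e : Equiv.Perm (Fin N), Real.exp (l * sPart x μ n e) := by positivity
  calc Real.log ((Nat.factorial N : ℝ)⁻¹ *
        ∑ e : Equiv.Perm (Fin N), Real.exp (l * sPart x μ n e))
      ≤ (b-a)^2/8 * l^2 * ((N:ℝ) - n)^2 * Sig0 := (Real.log_le_iff_le_exp hpos).mpr hEle
    _ ≤ (b - a) ^ 2 / 8 * l ^ 2 * n * (1 - ((n : ℝ) - 1) / N) := hfinal
end

section
/- Let X_1,...,X_n be sampled without replacement from a finite population of N > 1 reals with mean μ, minimum a and maximum b, and Z_n = (1/n)∑_{t=1}^n (X_t − μ). Then for any λ > 0 and 1 ≤ n ≤ N−1, log E[exp(λ n Z_n)] ≤ ((b−a)²/8) λ² (n+1)(1 − n/N). -/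
open MeasureTheory Finset Real
open scoped ENNReal

lemma hoeff_core (p : ℝ) (hp0 : 0 ≤ p) (hp1 : p ≤ 1) (u : ℝ) :
    (1 - p) * exp (-p * u) + p * exp ((1 - p) * u) ≤ exp (u ^ 2 / 8) := by
  set f : ℝ → ℝ := fun v => 1 - p + p * exp v with hf
  have hfpos : ∀ v, 0 < f v := by
    intro v
    simp only [hf]
    rcases eq_or_lt_of_le hp0 with h | h
    · rw [← h]; norm_num
    · have := exp_pos v
      nlinarith [mul_pos h (exp_pos v)]
  set D : ℝ → ℝ := fun v => p * exp v / f v - p - v / 4 with hD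
  -- derivative of D is nonpositive
  have hDderiv : ∀ v, HasDerivAt D
      ((p * exp v * f v - p * exp v * (p * exp v)) / (f v) ^ 2 - 1 / 4) v := by
    intro v
    have h1 : HasDerivAt (fun w => p * exp w) (p * exp v) v :=
      (hasDerivAt_exp v).const_mul p
    have h2 : HasDerivAt f (p * exp v) v := by
      exact h1.const_add (1 - p)
    have h3 : HasDerivAt (fun w => p * exp w / f w)
        ((p * exp v * f v - p * exp v * (p * exp v)) / (f v) ^ 2) v :=
      h1.div h2 (ne_of_gt (hfpos v))
    have h4 : HasDerivAt (fun w : ℝ => w / 4) (1 / 4) v := by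
      simpa using (hasDerivAt_id v).div_const 4
    exact (h3.sub_const p).sub h4
  have hDanti : Antitone D := by
    apply antitone_of_deriv_nonpos
    · intro v; exact (hDderiv v).differentiableAt
    · intro v
      rw [(hDderiv v).deriv]
      have hF : 0 < f v := hfpos v
      have hg0 : 0 ≤ p * exp v := mul_nonneg hp0 (le_of_lt (exp_pos v))
      have hgF : p * exp v ≤ f v := by simp only [hf]; linarith
      rw [sub_nonpos, div_le_iff₀ (by positivity)]
      set G := p * exp v with hG
      set F := f v with hFv
      clear_value G F
      nlinarith [sq_nonneg (F - 2 * G)]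
  have hD0 : D 0 = 0 := by
    simp only [hD, hf, exp_zero, mul_one]
    field_simp
    ring
  set ψ : ℝ → ℝ := fun v => log (f v) - p * v - v ^ 2 / 8 with hψ
  have hψderiv : ∀ v, HasDerivAt ψ (D v) v := by
    intro v
    have h1 : HasDerivAt (fun w => p * exp w) (p * exp v) v :=
      (hasDerivAt_exp v).const_mul p
    have h2 : HasDerivAt f (p * exp v) v := by
      exact h1.const_add (1 - p)
    have h3 : HasDerivAt (fun w => log (f w)) (p * exp v / f v) v :=
      h2.log (ne_of_gt (hfpos v))
    have h4 : HasDerivAt (fun w : ℝ => p * w) p v := by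
      simpa using (hasDerivAt_id v).const_mul p
    have h5 : HasDerivAt (fun w : ℝ => w ^ 2 / 8) (v / 4) v := by
      have h := (hasDerivAt_pow 2 v).div_const 8
      rw [show v / 4 = ((2:ℕ):ℝ) * v ^ (2 - 1) / 8 by
        simp only [Nat.cast_ofNat, show (2:ℕ) - 1 = 1 from rfl, pow_one]; ring]
      exact h
    exact (h3.sub h4).sub h5
  have hψ0 : ψ 0 = 0 := by simp [hψ, hf]
  have hψle : ∀ v, ψ v ≤ 0 := by
    intro v
    have hdiff : Differentiable ℝ ψ := fun w => (hψderiv w).differentiableAt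
    rcases le_total v 0 with hv | hv
    · have hmono : MonotoneOn ψ (Set.Iic 0) := by
        apply monotoneOn_of_deriv_nonneg (convex_Iic 0)
        · exact hdiff.continuous.continuousOn
        · intro w _; exact (hdiff w).differentiableWithinAt
        · intro w hw
          rw [(hψderiv w).deriv]
          have : w ≤ 0 := le_of_lt (by simpa using hw)
          calc (0:ℝ) = D 0 := hD0.symm
            _ ≤ D w := hDanti this
      calc ψ v ≤ ψ 0 := hmono hv Set.self_mem_Iic hv
        _ = 0 := hψ0
    · have hmono : AntitoneOn ψ (Set.Ici 0) := by
        apply antitoneOn_of_deriv_nonpos (convex_Ici 0)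
        · exact hdiff.continuous.continuousOn
        · intro w _; exact (hdiff w).differentiableWithinAt
        · intro w hw
          rw [(hψderiv w).deriv]
          have : 0 ≤ w := le_of_lt (by simpa using hw)
          calc D w ≤ D 0 := hDanti this
            _ = 0 := hD0
      calc ψ v ≤ ψ 0 := hmono Set.self_mem_Ici hv hv
        _ = 0 := hψ0
  -- conclude
  have hlog : log (f u) ≤ p * u + u ^ 2 / 8 := by have := hψle u; simp only [hψ] at this; linarith
  have hfle : f u ≤ exp (p * u + u ^ 2 / 8) := by
    rw [← exp_log (hfpos u)]; exact exp_le_exp.mpr hlog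
  have key : (1 - p) * exp (-p * u) + p * exp ((1 - p) * u) = exp (-(p * u)) * f u := by
    simp only [hf]
    rw [show (1 - p) * u = -(p*u) + u by ring, exp_add]
    ring_nf
  rw [key]
  calc exp (-(p*u)) * f u ≤ exp (-(p*u)) * exp (p * u + u ^ 2 / 8) :=
        mul_le_mul_of_nonneg_left hfle (le_of_lt (exp_pos _))
    _ = exp (u ^ 2 / 8) := by rw [← exp_add]; ring_nf

lemma hoeff_finite {K : ℕ} (w : Fin K → ℝ) (A B : ℝ)
    (hw : ∀ i, A ≤ w i ∧ w i ≤ B) (hsum : ∑ i, w i = 0) (s : ℝ) :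
    ∑ i, exp (s * w i) ≤ (K : ℝ) * exp (s ^ 2 * (B - A) ^ 2 / 8) := by
  rcases Nat.eq_zero_or_pos K with hK | hK
  · subst hK; simp
  have hKpos : (0:ℝ) < K := by exact_mod_cast hK
  have hA0 : A ≤ 0 := by
    have h1 : ∑ _i : Fin K, A ≤ ∑ i, w i := Finset.sum_le_sum (fun i _ => (hw i).1)
    rw [hsum, Finset.sum_const, Finset.card_univ, Fintype.card_fin, nsmul_eq_mul] at h1
    nlinarith
  have hB0 : 0 ≤ B := by
    have h1 : ∑ i, w i ≤ ∑ _i : Fin K, B := Finset.sum_le_sum (fun i _ => (hw i).2)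
    rw [hsum, Finset.sum_const, Finset.card_univ, Fintype.card_fin, nsmul_eq_mul] at h1
    nlinarith
  rcases eq_or_lt_of_le (le_trans hA0 hB0) with hAB | hAB
  · -- A = B hence A = B = 0 and all w i = 0
    have hA : A = 0 := le_antisymm hA0 (hAB ▸ hB0)
    have hB : B = 0 := hAB ▸ hA
    have hwz : ∀ i, w i = 0 := fun i => le_antisymm (hB ▸ (hw i).2) (hA ▸ (hw i).1)
    simp only [hwz, mul_zero, exp_zero]
    rw [Finset.sum_const, Finset.card_univ, Fintype.card_fin, nsmul_eq_mul, mul_one]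
    have : (0:ℝ) ≤ s ^ 2 * (B - A) ^ 2 / 8 := by positivity
    nlinarith [exp_pos (s ^ 2 * (B - A) ^ 2 / 8), one_le_exp this]
  -- main case A < B
  have hBA : (0:ℝ) < B - A := by linarith
  set p : ℝ := -A / (B - A) with hp
  have hp0 : 0 ≤ p := by apply div_nonneg <;> linarith
  have hp1 : p ≤ 1 := by rw [div_le_one hBA]; linarith
  have hconv : ∀ i, exp (s * w i) ≤
      (B - w i) / (B - A) * exp (s * A) + (w i - A) / (B - A) * exp (s * B) := by
    intro i
    have ha : 0 ≤ (B - w i) / (B - A) := by apply div_nonneg; linarith [(hw i).2]; linarith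
    have hb : 0 ≤ (w i - A) / (B - A) := by apply div_nonneg; linarith [(hw i).1]; linarith
    have hab : (B - w i) / (B - A) + (w i - A) / (B - A) = 1 := by field_simp; ring
    have := convexOn_exp.2 (Set.mem_univ (s * A)) (Set.mem_univ (s * B)) ha hb hab
    simp only [smul_eq_mul] at this
    have harg : (B - w i) / (B - A) * (s * A) + (w i - A) / (B - A) * (s * B) = s * w i := by
      field_simp; ring
    rwa [harg] at this
  calc ∑ i, exp (s * w i)
      ≤ ∑ i, ((B - w i) / (B - A) * exp (s * A) + (w i - A) / (B - A) * exp (s * B)) :=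
        Finset.sum_le_sum (fun i _ => hconv i)
    _ = (K : ℝ) * ((1 - p) * exp (s * A) + p * exp (s * B)) := by
        rw [Finset.sum_add_distrib, ← Finset.sum_mul, ← Finset.sum_mul]
        have h1 : ∑ i, (B - w i) / (B - A) = (K : ℝ) * (1 - p) := by
          rw [← Finset.sum_div]
          rw [Finset.sum_sub_distrib, hsum, Finset.sum_const, Finset.card_univ,
            Fintype.card_fin, nsmul_eq_mul]
          rw [hp]; field_simp; try ring
        have h2 : ∑ i, (w i - A) / (B - A) = (K : ℝ) * p := by
          rw [← Finset.sum_div]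
          rw [Finset.sum_sub_distrib, hsum, Finset.sum_const, Finset.card_univ,
            Fintype.card_fin, nsmul_eq_mul]
          rw [hp]; field_simp; ring
        rw [h1, h2]; ring
    _ ≤ (K : ℝ) * exp (s ^ 2 * (B - A) ^ 2 / 8) := by
        apply mul_le_mul_of_nonneg_left _ (le_of_lt hKpos)
        have key := hoeff_core p hp0 hp1 (s * (B - A))
        have e1 : -p * (s * (B - A)) = s * A := by
          rw [hp]; field_simp; try ring
        have e2 : (1 - p) * (s * (B - A)) = s * B := by
          rw [hp]; field_simp; try ring
        have e3 : (s * (B - A)) ^ 2 / 8 = s ^ 2 * (B - A) ^ 2 / 8 := by ring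
        rw [e1, e2, e3] at key
        linarith

lemma serfling_key (n : ℕ) :
    ∀ (M : ℕ) (h : n < M) (y : Fin M → ℝ) (a b : ℝ),
      (∀ i, a ≤ y i ∧ y i ≤ b) → ∀ lam : ℝ,
      ∑ e : Equiv.Perm (Fin M),
          exp (lam * ∑ t : Fin n, (y (e (Fin.castLE h.le t)) - (∑ i, y i) / M))
        ≤ (M.factorial : ℝ) *
            exp ((b - a) ^ 2 / 8 * lam ^ 2 * ((n : ℝ) * ((M : ℝ) - (n : ℝ) + 1) / M)) := by
  induction n with
  | zero =>
      intro M h y a b hy lam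
      simp [Finset.card_univ, Fintype.card_perm]
  | succ n ih =>
      intro M h y a b hy lam
      obtain ⟨m, rfl⟩ : ∃ m, M = m + 1 := ⟨M - 1, by omega⟩
      have hnm : n < m := by omega
      have hm0 : (0:ℝ) < (m:ℝ) := by exact_mod_cast (show 0 < m by omega)
      have hm1 : (0:ℝ) < (m:ℝ) + 1 := by linarith
      set S : ℝ := ∑ i, y i with hS
      set ν : ℝ := S / ((m:ℝ) + 1) with hν
      have hcast : ((m + 1 : ℕ) : ℝ) = (m:ℝ) + 1 := by push_cast; ring
      set y' : Fin (m+1) → Fin m → ℝ := fun j i => y (Equiv.swap 0 j i.succ) with hy'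
      have hbounds' : ∀ j i, a ≤ y' j i ∧ y' j i ≤ b := fun j i => hy _
      have hsum' : ∀ j, ∑ i, y' j i = S - y j := by
        intro j
        have h1 : ∑ i : Fin (m+1), y (Equiv.swap 0 j i) = S :=
          Equiv.sum_comp (Equiv.swap 0 j) y
        rw [Fin.sum_univ_succ] at h1
        rw [Equiv.swap_apply_left] at h1
        simp only [hy']
        linarith
      set s : ℝ := lam * (((m:ℝ) - (n:ℝ)) / (m:ℝ)) with hs
      -- pointwise decomposition of the summand
      have hpoint : ∀ (j : Fin (m+1)) (σ : Equiv.Perm (Fin m)),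
          exp (lam * ∑ t : Fin (n+1),
              (y ((Equiv.Perm.decomposeFin.symm (j, σ)) (Fin.castLE h.le t)) - S / ((m+1 : ℕ) : ℝ)))
            = exp (s * (y j - ν)) *
              exp (lam * ∑ t : Fin n,
                (y' j (σ (Fin.castLE hnm.le t)) - (∑ i, y' j i) / (m:ℝ))) := by
        intro j σ
        rw [← exp_add]
        congr 1
        rw [Fin.sum_univ_succ]
        have h0 : (Equiv.Perm.decomposeFin.symm (j, σ)) (Fin.castLE h.le (0 : Fin (n+1))) = j := by
          have : Fin.castLE h.le (0 : Fin (n+1)) = (0 : Fin (m+1)) := rfl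
          rw [this, Equiv.Perm.decomposeFin_symm_apply_zero]
        have hsucc : ∀ t : Fin n,
            (Equiv.Perm.decomposeFin.symm (j, σ)) (Fin.castLE h.le (Fin.succ t))
              = Equiv.swap 0 j (Fin.succ (σ (Fin.castLE hnm.le t))) := by
          intro t
          have h1 : Fin.castLE h.le (Fin.succ t) = Fin.succ (Fin.castLE hnm.le t) := by
            apply Fin.ext; simp
          rw [h1, Equiv.Perm.decomposeFin_symm_apply_succ]
        rw [h0]
        simp only [hsucc]
        rw [hsum' j]
        simp only [hy', hcast]
        rw [Finset.sum_sub_distrib, Finset.sum_sub_distrib, Finset.sum_const,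
          Finset.sum_const, Finset.card_univ, Fintype.card_fin, nsmul_eq_mul]
        rw [hs, hν]
        field_simp
        ring_nf
        field_simp
        ring
      calc ∑ e : Equiv.Perm (Fin (m+1)),
              exp (lam * ∑ t : Fin (n+1),
                (y (e (Fin.castLE h.le t)) - S / ((m+1:ℕ) : ℝ)))
          = ∑ p : Fin (m+1) × Equiv.Perm (Fin m),
              exp (lam * ∑ t : Fin (n+1),
                (y ((Equiv.Perm.decomposeFin.symm p) (Fin.castLE h.le t)) - S / ((m+1:ℕ) : ℝ))) := by
            rw [Equiv.sum_comp Equiv.Perm.decomposeFin.symm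
              (fun e => exp (lam * ∑ t : Fin (n+1),
                (y (e (Fin.castLE h.le t)) - S / ((m+1:ℕ) : ℝ))))]
        _ = ∑ j : Fin (m+1), ∑ σ : Equiv.Perm (Fin m),
              exp (s * (y j - ν)) *
              exp (lam * ∑ t : Fin n,
                (y' j (σ (Fin.castLE hnm.le t)) - (∑ i, y' j i) / (m:ℝ))) := by
            rw [Fintype.sum_prod_type]
            exact Finset.sum_congr rfl (fun j _ => Finset.sum_congr rfl (fun σ _ => hpoint j σ))
        _ = ∑ j : Fin (m+1), exp (s * (y j - ν)) *
              ∑ σ : Equiv.Perm (Fin m),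
              exp (lam * ∑ t : Fin n,
                (y' j (σ (Fin.castLE hnm.le t)) - (∑ i, y' j i) / (m:ℝ))) := by
            exact Finset.sum_congr rfl (fun j _ => (Finset.mul_sum _ _ _).symm)
        _ ≤ ∑ j : Fin (m+1), exp (s * (y j - ν)) *
              ((m.factorial : ℝ) *
                exp ((b - a) ^ 2 / 8 * lam ^ 2 * ((n : ℝ) * ((m : ℝ) - (n : ℝ) + 1) / m))) := by
            apply Finset.sum_le_sum
            intro j _
            exact mul_le_mul_of_nonneg_left
              (ih m hnm (y' j) a b (hbounds' j) lam) (exp_nonneg _)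
        _ = ((m.factorial : ℝ) *
              exp ((b - a) ^ 2 / 8 * lam ^ 2 * ((n : ℝ) * ((m : ℝ) - (n : ℝ) + 1) / m))) *
              ∑ j : Fin (m+1), exp (s * (y j - ν)) := by
            rw [← Finset.sum_mul]; ring
        _ ≤ ((m.factorial : ℝ) *
              exp ((b - a) ^ 2 / 8 * lam ^ 2 * ((n : ℝ) * ((m : ℝ) - (n : ℝ) + 1) / m))) *
              (((m+1 : ℕ) : ℝ) * exp (s ^ 2 * (b - a) ^ 2 / 8)) := by
            apply mul_le_mul_of_nonneg_left _ (by positivity)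
            have hzero : ∑ j : Fin (m+1), (y j - ν) = 0 := by
              rw [Finset.sum_sub_distrib, Finset.sum_const, Finset.card_univ,
                Fintype.card_fin, nsmul_eq_mul, hν, hcast]
              field_simp
              exact sub_self _
            have hw : ∀ j : Fin (m+1), a - ν ≤ y j - ν ∧ y j - ν ≤ b - ν := by
              intro j; constructor <;> linarith [(hy j).1, (hy j).2]
            have := hoeff_finite (fun j => y j - ν) (a - ν) (b - ν) hw hzero s
            have hba : (b - ν) - (a - ν) = b - a := by ring
            rw [hba] at this
            exact this
        _ ≤ (((m+1).factorial : ℝ)) *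
              exp ((b - a) ^ 2 / 8 * lam ^ 2 *
                (((n:ℝ) + 1) * (((m:ℝ) + 1) - ((n:ℝ) + 1) + 1) / ((m:ℝ) + 1))) := by
            rw [Nat.factorial_succ]
            push_cast
            have hfact : (0:ℝ) ≤ (m.factorial : ℝ) := by positivity
            have hexp : (b - a) ^ 2 / 8 * lam ^ 2 * ((n : ℝ) * ((m : ℝ) - (n : ℝ) + 1) / m)
                + s ^ 2 * (b - a) ^ 2 / 8
                ≤ (b - a) ^ 2 / 8 * lam ^ 2 *
                  (((n:ℝ) + 1) * (((m:ℝ) + 1) - ((n:ℝ) + 1) + 1) / ((m:ℝ) + 1)) := by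
              have hn' : (n:ℝ) + 1 ≤ (m:ℝ) := by exact_mod_cast hnm
              have hfrac : (n : ℝ) * ((m : ℝ) - (n : ℝ) + 1) / m
                  + (((m:ℝ) - (n:ℝ)) / (m:ℝ)) ^ 2
                  ≤ ((n:ℝ) + 1) * (((m:ℝ) + 1) - ((n:ℝ) + 1) + 1) / ((m:ℝ) + 1) := by
                rw [← sub_nonneg]
                have expand : ((n:ℝ) + 1) * (((m:ℝ) + 1) - ((n:ℝ) + 1) + 1) / ((m:ℝ) + 1)
                    - ((n : ℝ) * ((m : ℝ) - (n : ℝ) + 1) / m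
                      + (((m:ℝ) - (n:ℝ)) / (m:ℝ)) ^ 2)
                    = ((m:ℝ) - (n:ℝ)) * (n:ℝ) / ((m:ℝ)^2 * ((m:ℝ) + 1)) := by
                  field_simp
                  ring
                rw [expand]
                apply div_nonneg _ (by positivity)
                apply mul_nonneg _ (by positivity)
                linarith
              have hs2 : s ^ 2 * (b - a) ^ 2 / 8
                  = (b - a) ^ 2 / 8 * lam ^ 2 * ((((m:ℝ) - (n:ℝ)) / (m:ℝ)) ^ 2) := by
                rw [hs]; ring
              rw [hs2, ← mul_add]
              apply mul_le_mul_of_nonneg_left hfrac (by positivity)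
            calc (m.factorial : ℝ) *
                  exp ((b - a) ^ 2 / 8 * lam ^ 2 * ((n : ℝ) * ((m : ℝ) - (n : ℝ) + 1) / m)) *
                  (((m:ℝ) + 1) * exp (s ^ 2 * (b - a) ^ 2 / 8))
                = ((m:ℝ) + 1) * (m.factorial : ℝ) *
                  exp ((b - a) ^ 2 / 8 * lam ^ 2 * ((n : ℝ) * ((m : ℝ) - (n : ℝ) + 1) / m)
                    + s ^ 2 * (b - a) ^ 2 / 8) := by rw [exp_add]; ring
              _ ≤ ((m:ℝ) + 1) * (m.factorial : ℝ) *
                  exp ((b - a) ^ 2 / 8 * lam ^ 2 *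
                    (((n:ℝ) + 1) * (((m:ℝ) + 1) - ((n:ℝ) + 1) + 1) / ((m:ℝ) + 1))) := by
                  apply mul_le_mul_of_nonneg_left (exp_le_exp.mpr hexp) (by positivity)
        _ = (((m+1).factorial : ℝ)) *
              exp ((b - a) ^ 2 / 8 * lam ^ 2 *
                (((n+1 : ℕ) : ℝ) * (((m+1 : ℕ) : ℝ) - ((n+1 : ℕ) : ℝ) + 1) / ((m+1 : ℕ) : ℝ))) := by
            push_cast
            ring_nf

lemma my_integrable_dirac_s10 {α : Type*} [MeasurableSpace α] [MeasurableSingletonClass α]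
    (g : α → ℝ) (hg : MeasureTheory.StronglyMeasurable g) (v : α) :
    Integrable g (Measure.dirac v) := by
  refine ⟨hg.aestronglyMeasurable, ?_⟩
  rw [HasFiniteIntegral, lintegral_dirac]
  exact ENNReal.coe_lt_top

-- complement trick
lemma complement_sum (N n : ℕ) (hn1 : 1 ≤ n) (hnN : n < N) (x : Fin N → ℝ) (μ : ℝ)
    (hμ : μ = (∑ i, x i) / N) (l : ℝ) :
    ∑ e : Equiv.Perm (Fin N), exp (l * ∑ t : Fin n, (x (e (Fin.castLE hnN.le t)) - μ))
      = ∑ e : Equiv.Perm (Fin N),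
          exp ((-l) * ∑ t : Fin (N - n), (x (e (Fin.castLE (Nat.sub_le N n) t)) - μ)) := by
  haveI : NeZero N := ⟨by omega⟩
  have hN0 : (0:ℝ) < (N:ℝ) := by exact_mod_cast (show 0 < N by omega)
  set ρ : Fin N ≃ Fin N := Equiv.addLeft (Fin.ofNat N n) with hρ
  -- pointwise: sum over first n = - (sum over rotated last N - n)
  have hpoint : ∀ e : Equiv.Perm (Fin N),
      ∑ t : Fin n, (x (e (Fin.castLE hnN.le t)) - μ)
        = - ∑ t : Fin (N - n), (x (e (ρ (Fin.castLE (Nat.sub_le N n) t))) - μ) := by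
    intro e
    set g : ℕ → ℝ := fun t => if h : t < N then x (e ⟨t, h⟩) - μ else 0 with hg
    have h1 : ∑ t : Fin n, (x (e (Fin.castLE hnN.le t)) - μ) = ∑ t ∈ range n, g t := by
      rw [← Fin.sum_univ_eq_sum_range g n]
      apply Finset.sum_congr rfl
      intro t _
      have ht : (t : ℕ) < N := lt_of_lt_of_le t.isLt hnN.le
      simp only [hg, dif_pos ht]
      congr 1
    have h2 : ∑ t : Fin (N - n), (x (e (ρ (Fin.castLE (Nat.sub_le N n) t))) - μ)
        = ∑ t ∈ range (N - n), g (n + t) := by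
      rw [← Fin.sum_univ_eq_sum_range (fun t => g (n + t)) (N - n)]
      apply Finset.sum_congr rfl
      intro t _
      have ht : n + (t : ℕ) < N := by omega
      simp only [hg, dif_pos ht]
      congr 2
      · apply Fin.ext
        simp only [hρ, Equiv.coe_addLeft]
        rw [Fin.add_def]
        simp [Fin.val_ofNat, Nat.mod_eq_of_lt hnN, Nat.mod_eq_of_lt ht]
    have h3 : ∑ t ∈ range N, g t = 0 := by
      have : ∑ t ∈ range N, g t = ∑ t : Fin N, (x (e t) - μ) := by
        rw [← Fin.sum_univ_eq_sum_range g N]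
        apply Finset.sum_congr rfl
        intro t _
        simp only [hg, dif_pos t.isLt]
      rw [this, Finset.sum_sub_distrib, Equiv.sum_comp e x, Finset.sum_const,
        Finset.card_univ, Fintype.card_fin, nsmul_eq_mul, hμ]
      field_simp
      ring
    have h4 : ∑ t ∈ range n, g t + ∑ t ∈ Finset.Ico n N, g t = ∑ t ∈ range N, g t :=
      Finset.sum_range_add_sum_Ico g hnN.le
    have h5 : ∑ t ∈ Finset.Ico n N, g t = ∑ t ∈ range (N - n), g (n + t) :=
      Finset.sum_Ico_eq_sum_range g n N
    rw [h1, h2]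
    linarith [h4, h3, h5]
  calc ∑ e : Equiv.Perm (Fin N), exp (l * ∑ t : Fin n, (x (e (Fin.castLE hnN.le t)) - μ))
      = ∑ e : Equiv.Perm (Fin N),
          exp ((-l) * ∑ t : Fin (N - n), (x (e (ρ (Fin.castLE (Nat.sub_le N n) t))) - μ)) := by
        apply Finset.sum_congr rfl
        intro e _
        rw [hpoint e, mul_neg, neg_mul]
    _ = ∑ e : Equiv.Perm (Fin N),
          exp ((-l) * ∑ t : Fin (N - n), (x (e (Fin.castLE (Nat.sub_le N n) t)) - μ)) := by
        rw [← Equiv.sum_comp (Equiv.mulRight ρ)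
          (fun e : Equiv.Perm (Fin N) =>
            exp ((-l) * ∑ t : Fin (N - n), (x (e (Fin.castLE (Nat.sub_le N n) t)) - μ)))]
        apply Finset.sum_congr rfl
        intro e _
        simp [Equiv.Perm.mul_apply]


/-- Improved Serfling moment-generating-function bound (Bardenet–Maillard, Prop. 3):
`log E[exp(λ n Z_n)] ≤ ((b-a)²/8) λ² (n+1)(1 - n/N)`. -/
theorem improved_serfling_mgf_bound
    {Ω : Type*} [MeasurableSpace Ω] (P : Measure Ω) [IsProbabilityMeasure P]
    (N n : ℕ) (hN : 1 < N) (hn1 : 1 ≤ n) (hn : n ≤ N - 1) (x : Fin N → ℝ)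
    (X : ℕ → Ω → ℝ) (hXm : ∀ i, Measurable (X i))
    (hX : samplesWithoutReplacement P N x X)
    (a b : ℝ) (ha : IsLeast (Set.range x) a) (hb : IsGreatest (Set.range x) b)
    (μ : ℝ) (hμ : μ = (∑ i, x i) / N)
    (l : ℝ) (hl : 0 < l) :
    Real.log (∫ ω, Real.exp (l * ∑ t ∈ Finset.range n, (X t ω - μ)) ∂P) ≤
      (b - a) ^ 2 / 8 * l ^ 2 * ((n : ℝ) + 1) * (1 - (n : ℝ) / N) := by
  have hNn : n < N := by omega
  have hN0 : (0:ℝ) < (N:ℝ) := by exact_mod_cast (show 0 < N by omega)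
  have hax : ∀ i, a ≤ x i ∧ x i ≤ b := fun i => ⟨ha.2 ⟨i, rfl⟩, hb.2 ⟨i, rfl⟩⟩
  set g : (Fin N → ℝ) → ℝ :=
    fun v => Real.exp (l * ∑ t : Fin n, (v (Fin.castLE hNn.le t) - μ)) with hgdef
  have hgc : Continuous g := by
    apply Real.continuous_exp.comp
    apply Continuous.mul continuous_const
    apply continuous_finset_sum
    intro t _
    exact (continuous_apply _).sub continuous_const
  have hYm : Measurable (fun ω (i : Fin N) => X i ω) :=
    measurable_pi_lambda _ (fun i => hXm i)
  -- rewrite the integrand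
  have hfun : (fun ω => Real.exp (l * ∑ t ∈ Finset.range n, (X t ω - μ)))
      = fun ω => g ((fun ω (i : Fin N) => X i ω) ω) := by
    funext ω
    simp only [hgdef]
    congr 2
    rw [← Fin.sum_univ_eq_sum_range (fun t => X t ω - μ) n]
    apply Finset.sum_congr rfl
    intro t _
    simp [Fin.coe_castLE]
  have hint : ∫ ω, Real.exp (l * ∑ t ∈ Finset.range n, (X t ω - μ)) ∂P
      = ((N.factorial : ℝ))⁻¹ * ∑ e : Equiv.Perm (Fin N), g (fun i => x (e i)) := by
    rw [hfun]
    rw [← MeasureTheory.integral_map hYm.aemeasurable hgc.aestronglyMeasurable]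
    rw [hX]
    rw [MeasureTheory.integral_smul_measure]
    rw [MeasureTheory.integral_finset_sum_measure
      (fun e _ => my_integrable_dirac_s10 g hgc.stronglyMeasurable _)]
    simp only [MeasureTheory.integral_dirac]
    rw [ENNReal.toReal_inv, ENNReal.toReal_natCast, smul_eq_mul]
  have hsum_eq : ∑ e : Equiv.Perm (Fin N), g (fun i => x (e i))
      = ∑ e : Equiv.Perm (Fin N),
          Real.exp (l * ∑ t : Fin n, (x (e (Fin.castLE hNn.le t)) - μ)) := by
    apply Finset.sum_congr rfl
    intro e _
    simp only [hgdef]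
  have hchain : ∑ e : Equiv.Perm (Fin N),
      Real.exp (l * ∑ t : Fin n, (x (e (Fin.castLE hNn.le t)) - μ))
      ≤ (N.factorial : ℝ) *
        Real.exp ((b - a) ^ 2 / 8 * l ^ 2 * ((n : ℝ) + 1) * (1 - (n : ℝ) / N)) := by
    rw [complement_sum N n hn1 hNn x μ hμ l]
    have hlt : N - n < N := by omega
    have hkey := serfling_key (N - n) N hlt x a b hax (-l)
    rw [hμ]
    refine le_trans hkey ?_
    apply le_of_eq
    congr 1
    have hcast : ((N - n : ℕ) : ℝ) = (N : ℝ) - (n : ℝ) := by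
      push_cast [Nat.cast_sub hNn.le]; ring
    rw [hcast]
    have hnr : (n : ℝ) ≤ (N : ℝ) := by exact_mod_cast hNn.le
    field_simp
    ring
  have hB : 0 < ∑ e : Equiv.Perm (Fin N), g (fun i => x (e i)) := by
    apply Finset.sum_pos
    · intro e _
      exact Real.exp_pos _
    · exact Finset.univ_nonempty
  have hfac : (0:ℝ) < (N.factorial : ℝ) := by
    exact_mod_cast N.factorial_pos
  rw [hint, Real.log_le_iff_le_exp (by positivity)]
  rw [hsum_eq] at hB ⊢
  calc ((N.factorial : ℝ))⁻¹ * ∑ e : Equiv.Perm (Fin N),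
          Real.exp (l * ∑ t : Fin n, (x (e (Fin.castLE hNn.le t)) - μ))
      ≤ ((N.factorial : ℝ))⁻¹ * ((N.factorial : ℝ) *
          Real.exp ((b - a) ^ 2 / 8 * l ^ 2 * ((n : ℝ) + 1) * (1 - (n : ℝ) / N))) :=
        mul_le_mul_of_nonneg_left hchain (by positivity)
    _ = Real.exp ((b - a) ^ 2 / 8 * l ^ 2 * ((n : ℝ) + 1) * (1 - (n : ℝ) / N)) := by
        rw [← mul_assoc, inv_mul_cancel₀ (ne_of_gt hfac), one_mul]
end
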